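/- arXiv:1304.7160 — 3 statements merged into one kernel-verified Lean document; each statement's English description precedes it below -/
import Mathlib

section
/- For any nonempty ordered graph (H,π), any r ≥ 2, the function θ ↦ λ_{r,θ}(H,π) on [0,2] is continuous and piecewise linear with integer coefficients; in particular there exist finitely many linear functions with integer coefficients whose pointwise minimum structure gives λ_{r,θ}(H,π). -/
open scoped Classical

/-- A finite (vertex-)ordered graph: the vertices are natural numbers, ordered by the usual
order on `ℕ` with the *smallest* vertex being the youngest (the last one presented). -/
structure FinGraph where
  verts : Finset ℕ
  edges : Finset (Sym2 ℕ)
  edge_sub : ∀ e ∈ edges, ∀ x ∈ e, x ∈ verts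
  loopless : ∀ e ∈ edges, ¬ e.IsDiag

/-- The degree of a vertex `u` in `G`. -/
noncomputable def FinGraph.deg (G : FinGraph) (u : ℕ) : ℕ :=
  (G.edges.filter (fun e => u ∈ e)).card

/-- Delete the vertex `u` together with all incident edges. -/
noncomputable def FinGraph.del (G : FinGraph) (u : ℕ) : FinGraph where
  verts := G.verts.erase u
  edges := G.edges.filter (fun e => u ∉ e)
  edge_sub := by
    intro e he x hx
    rw [Finset.mem_filter] at he
    exact Finset.mem_erase.mpr ⟨fun hxu => he.2 (hxu ▸ hx), G.edge_sub e he.1 x hx⟩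
  loopless := by
    intro e he
    rw [Finset.mem_filter] at he
    exact G.loopless e he.1

/-- The youngest vertex of `G` (the minimum of its vertex set). -/
noncomputable def FinGraph.young (G : FinGraph) : ℕ := sInf (G.verts : Set ℕ)

/-- Fueled version of the recursive quantity `λ_{r,θ}` of Gugelmann–Spöhel:
`λ_{r,θ}(H) = 0` if `H` has no vertices, and otherwise, with `u₁` the youngest vertex,
`λ_{r,θ}(H) = 1 + (λ_{r,θ}(H∖u₁) - θ·deg_H(u₁))
            + (r-1)·min_{J ⊆ H, u₁ ∈ J} (λ_{r,θ}(J∖u₁) - θ·deg_J(u₁))`. -/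
noncomputable def lamAux (r : ℕ) (θ : ℝ) : ℕ → FinGraph → ℝ
  | 0, _ => 0
  | n + 1, G =>
    if G.verts.Nonempty then
      1 + (lamAux r θ n (G.del G.young) - θ * (G.deg G.young : ℝ))
        + ((r : ℝ) - 1) *
          sInf { x : ℝ | ∃ J : FinGraph,
            J.verts ⊆ G.verts ∧ J.edges ⊆ G.edges ∧ G.young ∈ J.verts ∧
            x = lamAux r θ n (J.del G.young) - θ * (J.deg G.young : ℝ) }
    else 0

/-- The quantity `λ_{r,θ}(H,π)` for the ordered graph `H` (ordered by `ℕ`). -/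
noncomputable def lam (r : ℕ) (θ : ℝ) (G : FinGraph) : ℝ := lamAux r θ G.verts.card G

open Finset

lemma my_add_inf' {α : Type*} (s : Finset α) (hs : s.Nonempty) (f : α → ℝ) (c : ℝ) :
    c + s.inf' hs f = s.inf' hs (fun x => c + f x) := by
  apply le_antisymm
  · exact le_inf' hs _ (fun x hx => by have := inf'_le f hx; linarith)
  · obtain ⟨x, hx, hx'⟩ := exists_mem_eq_inf' hs f
    rw [hx']
    exact inf'_le _ hx

lemma my_mul_inf' {α : Type*} (s : Finset α) (hs : s.Nonempty) (f : α → ℝ) (c : ℝ)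
    (hc : 0 ≤ c) : c * s.inf' hs f = s.inf' hs (fun x => c * f x) := by
  apply le_antisymm
  · exact le_inf' hs _ (fun x hx =>
      mul_le_mul_of_nonneg_left (inf'_le f hx) hc)
  · obtain ⟨x, hx, hx'⟩ := exists_mem_eq_inf' hs f
    rw [hx']
    exact inf'_le _ hx

lemma my_inf'_add_inf' {α β : Type*} (s : Finset α) (t : Finset β) (hs : s.Nonempty)
    (ht : t.Nonempty) (f : α → ℝ) (g : β → ℝ) :
    s.inf' hs f + t.inf' ht g = (s ×ˢ t).inf' (hs.product ht) (fun p => f p.1 + g p.2) := by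
  apply le_antisymm
  · refine le_inf' _ _ (fun p hp => ?_)
    rw [Finset.mem_product] at hp
    have h1 := inf'_le f hp.1
    have h2 := inf'_le g hp.2
    linarith
  · obtain ⟨x, hx, hx'⟩ := exists_mem_eq_inf' hs f
    obtain ⟨y, hy, hy'⟩ := exists_mem_eq_inf' ht g
    rw [hx', hy']
    exact inf'_le _ (show (x, y) ∈ s ×ˢ t from Finset.mem_product.mpr ⟨hx, hy⟩)

lemma my_cont_inf' {ι : Type*} (S : Finset ι) (hS : S.Nonempty) (f : ι → ℝ → ℝ)
    (hf : ∀ i, Continuous (f i)) :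
    Continuous (fun θ => S.inf' hS (fun i => f i θ)) := by
  induction hS using Finset.Nonempty.cons_induction with
  | singleton i => simp only [Finset.inf'_singleton]; exact hf i
  | cons i s hi hs ih =>
    have : (fun θ => (Finset.cons i s hi).inf' (Finset.cons_nonempty hi) (fun j => f j θ))
        = fun θ => min (f i θ) (s.inf' hs (fun j => f j θ)) := by
      funext θ; rw [Finset.inf'_cons]
    rw [this]
    exact (hf i).min ih
lemma my_inf'_congr {α : Type*} (s : Finset α) (hs hs' : s.Nonempty) (f g : α → ℝ)
    (h : ∀ x ∈ s, f x = g x) : s.inf' hs f = s.inf' hs' g := by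
  apply le_antisymm
  · obtain ⟨x, hx, hx'⟩ := Finset.exists_mem_eq_inf' hs' g
    rw [hx', ← h x hx]
    exact Finset.inf'_le f hx
  · obtain ⟨x, hx, hx'⟩ := Finset.exists_mem_eq_inf' hs f
    rw [hx', h x hx]
    exact Finset.inf'_le g hx

lemma FinGraph.ext' {G H : FinGraph} (hv : G.verts = H.verts) (he : G.edges = H.edges) :
    G = H := by
  cases G; cases H; simp_all

lemma sub_finite (G : FinGraph) :
    {J : FinGraph | J.verts ⊆ G.verts ∧ J.edges ⊆ G.edges ∧ G.young ∈ J.verts}.Finite := by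
  apply Set.Finite.of_finite_image (f := fun J => (J.verts, J.edges))
  · apply Set.Finite.subset (G.verts.powerset ×ˢ G.edges.powerset).finite_toSet
    rintro ⟨v, e⟩ ⟨J, hJ, hJe⟩
    simp only [Finset.coe_product, Set.mem_prod, Finset.mem_coe, Finset.mem_powerset]
    rw [Prod.mk.injEq] at hJe
    exact ⟨hJe.1 ▸ hJ.1, hJe.2 ▸ hJ.2.1⟩
  · intro J _ K _ h
    rw [Prod.mk.injEq] at h
    exact FinGraph.ext' h.1 h.2

lemma young_mem {G : FinGraph} (hG : G.verts.Nonempty) : G.young ∈ G.verts := by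
  have : sInf (G.verts : Set ℕ) ∈ (G.verts : Set ℕ) :=
    Nat.sInf_mem (Finset.coe_nonempty.mpr hG)
  exact this

lemma key (r : ℕ) (hr : 1 ≤ r) : ∀ n : ℕ, ∀ G : FinGraph,
    ∃ S : Finset (ℤ × ℤ), ∃ hS : S.Nonempty, ∀ θ : ℝ,
      lamAux r θ n G = S.inf' hS (fun p => (p.1 : ℝ) + (p.2 : ℝ) * θ) := by
  intro n
  induction n with
  | zero =>
    intro G
    exact ⟨{(0, 0)}, ⟨_, Finset.mem_singleton_self _⟩, by simp [lamAux]⟩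
  | succ n ih =>
    intro G
    by_cases hG : G.verts.Nonempty
    · choose SG hSG hval using ih
      have hfin : {J : FinGraph | J.verts ⊆ G.verts ∧ J.edges ⊆ G.edges ∧
          G.young ∈ J.verts}.Finite := sub_finite G
      set T : Finset FinGraph := hfin.toFinset with hTdef
      have hGT : G ∈ T := by
        rw [hTdef, Set.Finite.mem_toFinset]
        exact ⟨subset_rfl, subset_rfl, young_mem hG⟩
      have hT : T.Nonempty := ⟨G, hGT⟩
      have hSJne : ∀ J : FinGraph,
          ((SG (J.del G.young)).image
            (fun p => (p.1, p.2 - (J.deg G.young : ℤ)))).Nonempty :=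
        fun J => (hSG (J.del G.young)).image _
      set U : Finset (ℤ × ℤ) := T.biUnion (fun J =>
        (SG (J.del G.young)).image (fun p => (p.1, p.2 - (J.deg G.young : ℤ)))) with hU
      have hUne : U.Nonempty := hT.biUnion (fun J _ => hSJne J)
      have hAne : ((SG (G.del G.young)).image
          (fun p => (p.1 + 1, p.2 - (G.deg G.young : ℤ)))).Nonempty :=
        (hSG (G.del G.young)).image _
      have hBne : (U.image
          (fun q => (((r : ℤ) - 1) * q.1, ((r : ℤ) - 1) * q.2))).Nonempty :=
        hUne.image _
      refine ⟨(((SG (G.del G.young)).image (fun p => (p.1 + 1, p.2 - (G.deg G.young : ℤ)))) ×ˢ (U.image (fun q => (((r : ℤ) - 1) * q.1, ((r : ℤ) - 1) * q.2)))).image (fun pq : (ℤ × ℤ) × ℤ × ℤ => (pq.1.1 + pq.2.1, pq.1.2 + pq.2.2)),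
        (hAne.product hBne).image _, fun θ => ?_⟩
      have hrR : (0 : ℝ) ≤ (r : ℝ) - 1 := by
        have : (1 : ℝ) ≤ (r : ℝ) := by exact_mod_cast hr
        linarith
      have hset : { x : ℝ | ∃ J : FinGraph,
            J.verts ⊆ G.verts ∧ J.edges ⊆ G.edges ∧ G.young ∈ J.verts ∧
            x = lamAux r θ n (J.del G.young) - θ * (J.deg G.young : ℝ) }
          = (fun J => lamAux r θ n (J.del G.young) - θ * (J.deg G.young : ℝ)) ''
              (T : Set FinGraph) := by
        rw [hTdef, Set.Finite.coe_toFinset]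
        ext x
        constructor
        · rintro ⟨J, h1, h2, h3, hx⟩
          exact ⟨J, ⟨h1, h2, h3⟩, hx.symm⟩
        · rintro ⟨J, ⟨h1, h2, h3⟩, hx⟩
          exact ⟨J, h1, h2, h3, hx.symm⟩
      have hsInf : sInf ((fun J => lamAux r θ n (J.del G.young) - θ * (J.deg G.young : ℝ)) ''
              (T : Set FinGraph))
          = T.inf' hT (fun J => lamAux r θ n (J.del G.young) - θ * (J.deg G.young : ℝ)) :=
        (Finset.inf'_eq_csInf_image T hT _).symm
      have hper : ∀ J ∈ T, lamAux r θ n (J.del G.young) - θ * (J.deg G.young : ℝ)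
          = ((SG (J.del G.young)).image
              (fun p : ℤ × ℤ => ((p.1 : ℤ), p.2 - (J.deg G.young : ℤ)))).inf' (hSJne J)
              (fun p => (p.1 : ℝ) + (p.2 : ℝ) * θ) := by
        intro J _
        rw [hval (J.del G.young) θ, sub_eq_neg_add, my_add_inf' _ _ _ _,
          Finset.inf'_image]
        apply my_inf'_congr
        intro p _
        simp only [Function.comp]
        push_cast
        ring
      have hbu : T.inf' hT (fun J => ((SG (J.del G.young)).image
              (fun p : ℤ × ℤ => ((p.1 : ℤ), p.2 - (J.deg G.young : ℤ)))).inf' (hSJne J)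
              (fun p => (p.1 : ℝ) + (p.2 : ℝ) * θ))
          = U.inf' hUne (fun p => (p.1 : ℝ) + (p.2 : ℝ) * θ) :=
        (Finset.inf'_biUnion (f := fun p : ℤ × ℤ => (p.1 : ℝ) + (p.2 : ℝ) * θ) hT (fun J => hSJne J)).symm
      have hAeq : 1 + ((SG (G.del G.young)).inf' (hSG _)
              (fun p => (p.1 : ℝ) + (p.2 : ℝ) * θ) - θ * (G.deg G.young : ℝ))
          = ((SG (G.del G.young)).image (fun p : ℤ × ℤ => ((p.1 : ℤ) + 1, p.2 - (G.deg G.young : ℤ)))).inf' hAne (fun p => (p.1 : ℝ) + (p.2 : ℝ) * θ) := by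
        have h0 : 1 + ((SG (G.del G.young)).inf' (hSG _)
              (fun p => (p.1 : ℝ) + (p.2 : ℝ) * θ) - θ * (G.deg G.young : ℝ))
            = (1 - θ * (G.deg G.young : ℝ)) + (SG (G.del G.young)).inf' (hSG _)
              (fun p => (p.1 : ℝ) + (p.2 : ℝ) * θ) := by ring
        rw [h0, my_add_inf' _ _ _ _, Finset.inf'_image]
        apply my_inf'_congr
        intro p _
        simp only [Function.comp]
        push_cast
        ring
      have hBeq : ((r : ℝ) - 1) * U.inf' hUne (fun p => (p.1 : ℝ) + (p.2 : ℝ) * θ)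
          = (U.image (fun q => (((r : ℤ) - 1) * q.1, ((r : ℤ) - 1) * q.2))).inf' hBne (fun p => (p.1 : ℝ) + (p.2 : ℝ) * θ) := by
        rw [my_mul_inf' _ _ _ _ hrR, Finset.inf'_image]
        apply my_inf'_congr
        intro p _
        simp only [Function.comp]
        push_cast
        ring
      have hsum : ((SG (G.del G.young)).image (fun p : ℤ × ℤ => ((p.1 : ℤ) + 1, p.2 - (G.deg G.young : ℤ)))).inf' hAne (fun p => (p.1 : ℝ) + (p.2 : ℝ) * θ)
            + (U.image (fun q => (((r : ℤ) - 1) * q.1, ((r : ℤ) - 1) * q.2))).inf' hBne (fun p => (p.1 : ℝ) + (p.2 : ℝ) * θ)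
          = ((((SG (G.del G.young)).image (fun p : ℤ × ℤ => ((p.1 : ℤ) + 1, p.2 - (G.deg G.young : ℤ)))) ×ˢ (U.image (fun q => (((r : ℤ) - 1) * q.1, ((r : ℤ) - 1) * q.2)))).image
              (fun pq : (ℤ × ℤ) × ℤ × ℤ => (pq.1.1 + pq.2.1, pq.1.2 + pq.2.2))).inf'
              ((hAne.product hBne).image _) (fun p => (p.1 : ℝ) + (p.2 : ℝ) * θ) := by
        rw [my_inf'_add_inf', Finset.inf'_image]
        apply my_inf'_congr
        intro p _
        simp only [Function.comp]
        push_cast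
        ring
      have hmain : lamAux r θ (n + 1) G
          = 1 + (lamAux r θ n (G.del G.young) - θ * (G.deg G.young : ℝ))
            + ((r : ℝ) - 1) * sInf { x : ℝ | ∃ J : FinGraph,
                J.verts ⊆ G.verts ∧ J.edges ⊆ G.edges ∧ G.young ∈ J.verts ∧
                x = lamAux r θ n (J.del G.young) - θ * (J.deg G.young : ℝ) } := by
        rw [lamAux, if_pos hG]
      rw [hmain, hset, hsInf, my_inf'_congr T hT hT _ _ hper, hbu,
        hval (G.del G.young) θ, hAeq, hBeq]
      exact hsum
    · refine ⟨{(0, 0)}, ⟨_, Finset.mem_singleton_self _⟩, fun θ => ?_⟩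
      simp [lamAux, hG]

/-- For any nonempty ordered graph `(H,π)` and any `r ≥ 2`, the function
`θ ↦ λ_{r,θ}(H,π)` on `[0,2]` is continuous and piecewise linear with integer
coefficients: it is the pointwise minimum of finitely many linear functions
`θ ↦ a + b·θ` with `a, b ∈ ℤ`. -/
theorem lam_continuous_piecewise_linear (r : ℕ) (hr : 2 ≤ r)
    (G : FinGraph) (hG : G.verts.Nonempty) :
    ContinuousOn (fun θ : ℝ => lam r θ G) (Set.Icc (0 : ℝ) 2) ∧
    ∃ S : Finset (ℤ × ℤ), ∃ hS : S.Nonempty, ∀ θ ∈ Set.Icc (0 : ℝ) 2,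
      lam r θ G = S.inf' hS (fun p => (p.1 : ℝ) + (p.2 : ℝ) * θ) := by
  obtain ⟨S, hS, hval⟩ := key r (le_trans one_le_two hr) G.verts.card G
  have hlam : ∀ θ : ℝ, lam r θ G = S.inf' hS (fun p => (p.1 : ℝ) + (p.2 : ℝ) * θ) :=
    fun θ => hval θ
  constructor
  · have hc : Continuous (fun θ : ℝ => S.inf' hS (fun p => (p.1 : ℝ) + (p.2 : ℝ) * θ)) :=
      my_cont_inf' S hS (fun p θ => (p.1 : ℝ) + (p.2 : ℝ) * θ)
        (fun p => by continuity)
    exact hc.continuousOn.congr (fun θ _ => hlam θ)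
  · exact ⟨S, hS, fun θ _ => hlam θ⟩
end

section
/- For integers ℓ ≥ 3, k ≥ 3, r ≥ 2, the graph C_{ℓ,k}^{r*} is balanced: for every nonempty subgraph H ⊆ C_{ℓ,k}^{r*} one has e(H)/v(H) ≤ e(C_{ℓ,k}^{r*})/v(C_{ℓ,k}^{r*}). -/
/-- Vertex type of the graph `C_{ℓ,k}^{r+}` (and of `C_{ℓ,k}^{r*}`): a common center
(`none`), and for each of the `k* = r(k-1)+1` petals an outer endpoint (`some (p, none)`)
and, for each of the `r` paths of length `ℓ-1` of the petal, `ℓ-2` internal path vertices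
(`some (p, some (q, i))`). -/
abbrev CV (ℓ k r : ℕ) : Type :=
  Option (Fin (r * (k - 1) + 1) × Option (Fin r × Fin (ℓ - 2)))

/-- Base (one-directional) adjacency: center–first internal vertex, consecutive internal
vertices, last internal vertex–outer endpoint of the petal, and (when `star = true`)
the `k*` "missing edges" center–outer endpoint forming the center star. -/
def cBase (ℓ k r : ℕ) (star : Bool) : CV ℓ k r → CV ℓ k r → Prop
  | none, some (_, some (_, i)) => (i : ℕ) = 0
  | some (p, some (q, i)), some (p', some (q', j)) => p = p' ∧ q = q' ∧ (j : ℕ) = (i : ℕ) + 1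
  | some (p, some (_, i)), some (p', none) => p = p' ∧ (i : ℕ) = ℓ - 3
  | none, some (_, none) => star = true
  | _, _ => False

/-- The graph `C_{ℓ,k}^{r+}` (for `star = false`) resp. `C_{ℓ,k}^{r*}` (for `star = true`):
`k* = r(k-1)+1` petals (each consisting of `r` internally disjoint paths of length `ℓ-1`
between two endpoints) joined at a common center vertex, with the center star added if
`star = true`. -/
def CGraph (ℓ k r : ℕ) (star : Bool) : SimpleGraph (CV ℓ k r) where
  Adj x y := x ≠ y ∧ (cBase ℓ k r star x y ∨ cBase ℓ k r star y x)
  symm := ⟨fun _ _ h => ⟨h.1.symm, h.2.symm⟩⟩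
  loopless := ⟨fun _ h => h.1 rfl⟩

noncomputable instance (ℓ k r : ℕ) (s : Bool) : DecidableRel (CGraph ℓ k r s).Adj :=
  fun _ _ => Classical.dec _

namespace CB

variable {ℓ k r : ℕ}

/-- hub (outer endpoint) of petal `p` -/
def hb (p : Fin (r * (k-1) + 1)) : CV ℓ k r := some (p, none)

/-- internal vertex -/
def iv (p : Fin (r * (k-1) + 1)) (q : Fin r) (i : Fin (ℓ - 2)) : CV ℓ k r :=
  some (p, some (q, i))

/-- predecessor along the path (center for i = 0) -/
def prevV (p : Fin (r * (k-1) + 1)) (q : Fin r) (i : Fin (ℓ - 2)) : CV ℓ k r :=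
  if h : (i : ℕ) = 0 then none else iv p q ⟨(i : ℕ) - 1, by have := i.isLt; omega⟩

/-- successor along the path (hub for i = ℓ-3) -/
def nextV (p : Fin (r * (k-1) + 1)) (q : Fin r) (i : Fin (ℓ - 2)) : CV ℓ k r :=
  if h : (i : ℕ) + 1 < ℓ - 2 then iv p q ⟨(i : ℕ) + 1, h⟩ else hb p

lemma adj_ctr_hb (p) : (CGraph ℓ k r true).Adj none (hb p) := by
  show _ ≠ _ ∧ (_ ∨ _)
  refine ⟨by simp [hb], Or.inl ?_⟩; simp [cBase, hb]

lemma adj_ctr_iv0 (p q) (h0 : 0 < ℓ - 2) :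
    (CGraph ℓ k r true).Adj none (iv p q ⟨0, h0⟩) := by
  show _ ≠ _ ∧ (_ ∨ _)
  refine ⟨by simp [iv], Or.inl ?_⟩; simp [cBase, iv]

lemma adj_iv_succ (p q) (i j : Fin (ℓ - 2)) (hij : (j : ℕ) = (i : ℕ) + 1) :
    (CGraph ℓ k r true).Adj (iv p q i) (iv p q j) := by
  show _ ≠ _ ∧ (_ ∨ _)
  refine ⟨by simp [iv]; omega, Or.inl ?_⟩; simp [cBase, iv, hij]

lemma adj_iv_hb (p q) (i : Fin (ℓ - 2)) (hi : (i : ℕ) = ℓ - 3) :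
    (CGraph ℓ k r true).Adj (iv p q i) (hb p) := by
  show _ ≠ _ ∧ (_ ∨ _)
  refine ⟨by simp [iv, hb], Or.inl ?_⟩; simp [cBase, iv, hb, hi]

lemma prev_adj (p q i) : (CGraph ℓ k r true).Adj (iv p q i) (prevV p q i) := by
  unfold prevV
  split
  · next h =>
      have hi : i = ⟨0, by have := i.isLt; omega⟩ := Fin.ext h
      rw [hi]
      exact (adj_ctr_iv0 p q (by have := i.isLt; omega)).symm
  · next h =>
      exact (adj_iv_succ p q ⟨(i : ℕ) - 1, by have := i.isLt; omega⟩ i (by simp; omega)).symm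

lemma next_adj (p q i) : (CGraph ℓ k r true).Adj (iv p q i) (nextV p q i) := by
  unfold nextV
  split
  · next h => exact adj_iv_succ p q i _ (by simp)
  · next h => exact adj_iv_hb p q i (by have := i.isLt; omega)

lemma prev_ne_next (p q i) : prevV (ℓ := ℓ) (k := k) (r := r) p q i ≠ nextV p q i := by
  unfold prevV nextV
  split <;> split <;> simp [iv, hb] <;> omega

/-- every G-neighbor of an internal vertex is prevV or nextV -/
lemma nbr_internal (p q i) :
    (CGraph ℓ k r true).neighborSet (iv p q i) ⊆ {prevV p q i, nextV p q i} := by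
  rintro y (⟨hne, hadj | hadj⟩ : _ ≠ y ∧ (cBase ℓ k r true _ y ∨ cBase ℓ k r true y _))
  · rcases y with _ | ⟨p', _ | ⟨q', j⟩⟩
    · simp [cBase, iv] at hadj
    · obtain ⟨hp, hi⟩ := hadj
      have : nextV (ℓ := ℓ) (k := k) (r := r) p q i = hb p' := by
        unfold nextV; rw [dif_neg (by have := i.isLt; omega), hp]
      simp [Set.mem_insert_iff, this, hb]
    · obtain ⟨hp, hq, hj⟩ := hadj
      have : nextV (ℓ := ℓ) (k := k) (r := r) p q i = iv p' q' j := by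
        unfold nextV; rw [dif_pos (by have := j.isLt; omega)]
        subst hp hq; simp [iv]; exact (Fin.ext hj.symm)
      simp [Set.mem_insert_iff, this, iv]
  · rcases y with _ | ⟨p', _ | ⟨q', j⟩⟩
    · have hi0 : (i : ℕ) = 0 := hadj
      have : prevV (ℓ := ℓ) (k := k) (r := r) p q i = none := by unfold prevV; rw [dif_pos hi0]
      simp [Set.mem_insert_iff, this]
    · simp [cBase, iv, hb] at hadj
    · obtain ⟨hp, hq, hj⟩ := hadj
      have : prevV (ℓ := ℓ) (k := k) (r := r) p q i = iv p' q' j := by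
        unfold prevV; rw [dif_neg (by omega)]
        subst hp hq; simp [iv]
        exact Fin.ext (by simp; omega)
      simp [Set.mem_insert_iff, this, iv]

/-- every G-neighbor of a hub is the center or a last internal vertex of its petal -/
lemma nbr_hub (hℓ : 3 ≤ ℓ) (p) :
    (CGraph ℓ k r true).neighborSet (hb p) ⊆
      {y | y = none ∨ ∃ q, y = iv p q ⟨ℓ - 3, by omega⟩} := by
  rintro y (⟨hne, hadj | hadj⟩ : _ ≠ y ∧ (cBase ℓ k r true _ y ∨ cBase ℓ k r true y _))
  · rcases y with _ | ⟨p', _ | ⟨q', j⟩⟩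
    · exact Or.inl rfl
    · exact absurd hadj (by simp [cBase, hb])
    · exact absurd hadj (by simp [cBase, hb])
  · rcases y with _ | ⟨p', _ | ⟨q', j⟩⟩
    · exact Or.inl rfl
    · exact absurd hadj (by simp [cBase, hb])
    · obtain ⟨hp, hj⟩ := hadj
      exact Or.inr ⟨q', by simp [iv, ← hp, Fin.ext_iff, hj]⟩

end CB

namespace CB
variable {ℓ k r : ℕ}

lemma card_CV : Fintype.card (CV ℓ k r) = (r*(k-1)+1) * (r*(ℓ-2)+1) + 1 := by
  simp [Fintype.card_option, Fintype.card_prod, Fintype.card_fin, mul_comm]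

lemma deg_internal_ge (p q i) : 2 ≤ (CGraph ℓ k r true).degree (iv p q i) := by
  classical
  have hsub : ({prevV p q i, nextV p q i} : Finset (CV ℓ k r)) ⊆
      (CGraph ℓ k r true).neighborFinset (iv p q i) := by
    intro y hy
    rw [Finset.mem_insert, Finset.mem_singleton] at hy
    rcases hy with rfl | rfl
    · exact (SimpleGraph.mem_neighborFinset _ _ _).2 (prev_adj p q i)
    · exact (SimpleGraph.mem_neighborFinset _ _ _).2 (next_adj p q i)
  calc 2 = ({prevV p q i, nextV p q i} : Finset (CV ℓ k r)).card := by
            rw [Finset.card_pair (prev_ne_next p q i)]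
    _ ≤ _ := Finset.card_le_card hsub

lemma deg_hub_ge (hℓ : 3 ≤ ℓ) (p) : r + 1 ≤ (CGraph ℓ k r true).degree (hb p) := by
  classical
  have hsub : insert (none : CV ℓ k r)
      (Finset.univ.image (fun q : Fin r => iv p q ⟨ℓ-3, by omega⟩)) ⊆
      (CGraph ℓ k r true).neighborFinset (hb p) := by
    intro y hy
    rw [Finset.mem_insert] at hy
    rcases hy with rfl | hy
    · exact (SimpleGraph.mem_neighborFinset _ _ _).2 (adj_ctr_hb p).symm
    · obtain ⟨q, _, rfl⟩ := Finset.mem_image.1 hy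
      exact (SimpleGraph.mem_neighborFinset _ _ _).2 (adj_iv_hb p q _ rfl).symm
  have hcard : (insert (none : CV ℓ k r)
      (Finset.univ.image (fun q : Fin r => iv p q ⟨ℓ-3, by omega⟩))).card = r + 1 := by
    rw [Finset.card_insert_of_notMem (by simp [iv]),
      Finset.card_image_of_injective _ (fun a b hab => by simpa [iv] using hab)]
    simp [add_comm]
  calc r + 1 = _ := hcard.symm
    _ ≤ _ := Finset.card_le_card hsub

lemma deg_ctr_ge (hℓ : 3 ≤ ℓ) :
    (r*(k-1)+1) * (r + 1) ≤ (CGraph ℓ k r true).degree (none : CV ℓ k r) := by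
  classical
  have h0 : 0 < ℓ - 2 := by omega
  have hsub : (Finset.univ.image (hb : Fin (r*(k-1)+1) → CV ℓ k r)) ∪
      (Finset.univ.image (fun pq : Fin (r*(k-1)+1) × Fin r => iv pq.1 pq.2 ⟨0, h0⟩)) ⊆
      (CGraph ℓ k r true).neighborFinset (none : CV ℓ k r) := by
    intro y hy
    rw [Finset.mem_union] at hy
    rcases hy with hy | hy
    · obtain ⟨p, _, rfl⟩ := Finset.mem_image.1 hy
      exact (SimpleGraph.mem_neighborFinset _ _ _).2 (adj_ctr_hb p)
    · obtain ⟨pq, _, rfl⟩ := Finset.mem_image.1 hy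
      exact (SimpleGraph.mem_neighborFinset _ _ _).2 (adj_ctr_iv0 pq.1 pq.2 h0)
  have hcard : ((Finset.univ.image (hb : Fin (r*(k-1)+1) → CV ℓ k r)) ∪
      (Finset.univ.image (fun pq : Fin (r*(k-1)+1) × Fin r => iv pq.1 pq.2 ⟨0, h0⟩))).card
      = (r*(k-1)+1) * (r + 1) := by
    rw [Finset.card_union_of_disjoint]
    · rw [Finset.card_image_of_injective _ (fun a b hab => by simpa [hb] using hab),
        Finset.card_image_of_injective _ (fun a b hab => by
          simpa [iv, Prod.ext_iff] using hab)]
      simp [Fintype.card_prod]; ring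
    · rw [Finset.disjoint_left]
      rintro y hy hy'
      obtain ⟨p, _, rfl⟩ := Finset.mem_image.1 hy
      obtain ⟨pq, _, h⟩ := Finset.mem_image.1 hy'
      simp [hb, iv] at h
  calc (r*(k-1)+1) * (r+1) = _ := hcard.symm
    _ ≤ _ := Finset.card_le_card hsub

lemma edge_lb (hℓ : 3 ≤ ℓ) :
    (r*(k-1)+1) * (r*(ℓ-2) + r + 1) ≤ (CGraph ℓ k r true).edgeSet.ncard := by
  classical
  have hsum := SimpleGraph.sum_degrees_eq_twice_card_edges (CGraph ℓ k r true)
  have hge : 2 * ((r*(k-1)+1) * (r*(ℓ-2) + r + 1)) ≤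
      ∑ v : CV ℓ k r, (CGraph ℓ k r true).degree v := by
    rw [Fintype.sum_option]
    have h1 : ∀ p : Fin (r*(k-1)+1),
        r + 1 + (r * (ℓ-2)) * 2 ≤
          ∑ o : Option (Fin r × Fin (ℓ-2)), (CGraph ℓ k r true).degree (some (p, o)) := by
      intro p
      rw [Fintype.sum_option]
      have h2 : (r * (ℓ-2)) * 2 ≤
          ∑ qi : Fin r × Fin (ℓ-2), (CGraph ℓ k r true).degree (some (p, some qi)) := by
        calc (r * (ℓ-2)) * 2 = ∑ _qi : Fin r × Fin (ℓ-2), 2 := by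
              simp [Finset.sum_const, Fintype.card_prod, mul_comm]
          _ ≤ _ := Finset.sum_le_sum (fun qi _ => deg_internal_ge p qi.1 qi.2)
      exact add_le_add (deg_hub_ge hℓ p) h2
    have h3 : ∑ x : Fin (r*(k-1)+1) × Option (Fin r × Fin (ℓ-2)),
        (CGraph ℓ k r true).degree (some x)
        = ∑ p, ∑ o, (CGraph ℓ k r true).degree (some (p, o)) := Fintype.sum_prod_type _
    rw [h3]
    have h4 : (r*(k-1)+1) * (r + 1 + (r * (ℓ-2)) * 2) ≤
        ∑ p, ∑ o, (CGraph ℓ k r true).degree (some (p, o)) := by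
      calc (r*(k-1)+1) * (r + 1 + (r * (ℓ-2)) * 2)
          = ∑ _p : Fin (r*(k-1)+1), (r + 1 + (r * (ℓ-2)) * 2) := by
            simp [Finset.sum_const, mul_comm]
        _ ≤ _ := Finset.sum_le_sum (fun p _ => h1 p)
    have h5 := add_le_add (deg_ctr_ge (k := k) (r := r) hℓ) h4
    calc 2 * ((r*(k-1)+1) * (r*(ℓ-2) + r + 1))
        = (r*(k-1)+1) * (r + 1) + (r*(k-1)+1) * (r + 1 + (r * (ℓ-2)) * 2) := by ring
      _ ≤ _ := h5
  rw [hsum] at hge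
  have : (CGraph ℓ k r true).edgeSet.ncard = (CGraph ℓ k r true).edgeFinset.card := by
    rw [← SimpleGraph.coe_edgeFinset, Set.ncard_coe_finset]
  omega

end CB

namespace CB
variable {ℓ k r : ℕ} (H : (CGraph ℓ k r true).Subgraph)

lemma verts_del (x : CV ℓ k r) (hx : x ∈ H.verts) :
    (H.deleteVerts {x}).verts.ncard = H.verts.ncard - 1 := by
  have : (H.deleteVerts {x}).verts = H.verts \ {x} := rfl
  rw [this]
  rw [Set.ncard_diff_singleton_of_mem hx]

lemma edge_del (x : CV ℓ k r) :
    H.edgeSet.ncard ≤ (H.deleteVerts {x}).edgeSet.ncard + (H.neighborSet x).ncard := by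
  classical
  set H' := H.deleteVerts {x} with hH'
  set D : Set (Sym2 (CV ℓ k r)) := {e | e ∈ H.edgeSet ∧ x ∈ e} with hD
  have hsub : H.edgeSet ⊆ H'.edgeSet ∪ D := by
    intro e he
    induction e with
    | _ a b =>
      by_cases hx : x ∈ (s(a, b) : Sym2 (CV ℓ k r))
      · exact Or.inr ⟨he, hx⟩
      · left
        rw [Sym2.mem_iff, not_or] at hx
        rw [SimpleGraph.Subgraph.mem_edgeSet] at he ⊢
        exact SimpleGraph.Subgraph.deleteVerts_adj.2
          ⟨he.fst_mem, by simpa using Ne.symm hx.1, he.snd_mem,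
            by simpa using Ne.symm hx.2, he⟩
  have hD : D.ncard ≤ (H.neighborSet x).ncard := by
    apply Set.ncard_le_ncard_of_injOn
      (fun e => if h : x ∈ e then Sym2.Mem.other h else x)
    · rintro e ⟨he, hx⟩
      rw [dif_pos hx]
      have hspec := Sym2.other_spec hx
      rw [SimpleGraph.Subgraph.mem_neighborSet]
      rw [← SimpleGraph.Subgraph.mem_edgeSet, hspec]
      exact he
    · rintro e1 ⟨he1, hx1⟩ e2 ⟨he2, hx2⟩ heq
      dsimp only at heq
      rw [dif_pos hx1, dif_pos hx2] at heq
      rw [← Sym2.other_spec hx1, ← Sym2.other_spec hx2, heq]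
  calc H.edgeSet.ncard ≤ (H'.edgeSet ∪ D).ncard := Set.ncard_le_ncard hsub (Set.toFinite _)
    _ ≤ H'.edgeSet.ncard + D.ncard := Set.ncard_union_le _ _
    _ ≤ _ := by omega

end CB

namespace CB
variable {ℓ k r : ℕ}

/-- set of fully-present paths (as witnessed by any internal vertex) -/
def TS (H : (CGraph ℓ k r true).Subgraph) : Set (Fin (r*(k-1)+1) × Fin r) :=
  {pq | ∃ i, iv pq.1 pq.2 i ∈ H.verts}

/-- set of active petals -/
def PS (H : (CGraph ℓ k r true).Subgraph) : Set (Fin (r*(k-1)+1)) :=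
  Prod.fst '' TS H

section MinDeg

variable {H : (CGraph ℓ k r true).Subgraph}
variable (hmin : ∀ x ∈ H.verts, 2 ≤ (H.neighborSet x).ncard)

include hmin

/-- forced adjacency at internal vertices -/
lemma internal_force (p q i) (hx : iv p q i ∈ H.verts) :
    H.Adj (iv p q i) (prevV p q i) ∧ H.Adj (iv p q i) (nextV p q i) := by
  have hsub : H.neighborSet (iv p q i) ⊆ {prevV p q i, nextV p q i} :=
    (H.neighborSet_subset _).trans (nbr_internal p q i)
  have hpair : ({prevV p q i, nextV p q i} : Set (CV ℓ k r)).ncard = 2 :=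
    Set.ncard_pair (prev_ne_next p q i)
  have heq : H.neighborSet (iv p q i) = {prevV p q i, nextV p q i} :=
    Set.eq_of_subset_of_ncard_le hsub (by rw [hpair]; exact hmin _ hx) (Set.toFinite _)
  constructor
  · have : prevV p q i ∈ H.neighborSet (iv p q i) := by rw [heq]; exact Set.mem_insert _ _
    exact this
  · have : nextV p q i ∈ H.neighborSet (iv p q i) := by
      rw [heq]; exact Set.mem_insert_of_mem _ rfl
    exact this

lemma step_pred (p q) (i : Fin (ℓ-2)) (hx : iv p q i ∈ H.verts) (h0 : (i : ℕ) ≠ 0) :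
    iv p q ⟨(i:ℕ)-1, by have := i.isLt; omega⟩ ∈ H.verts := by
  have h := (internal_force hmin p q i hx).1
  have hp : prevV p q i = iv p q ⟨(i:ℕ)-1, by have := i.isLt; omega⟩ := by
    unfold prevV; rw [dif_neg h0]
  rw [hp] at h
  exact h.snd_mem

lemma step_succ (p q) (i : Fin (ℓ-2)) (hx : iv p q i ∈ H.verts) (h1 : (i:ℕ)+1 < ℓ-2) :
    iv p q ⟨(i:ℕ)+1, h1⟩ ∈ H.verts := by
  have h := (internal_force hmin p q i hx).2
  have hn : nextV p q i = iv p q ⟨(i:ℕ)+1, h1⟩ := by unfold nextV; rw [dif_pos h1]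
  rw [hn] at h
  exact h.snd_mem

/-- all internal vertices of a present path are present -/
lemma all_internal (p q) (i : Fin (ℓ-2)) (hx : iv p q i ∈ H.verts) (j : Fin (ℓ-2)) :
    iv p q j ∈ H.verts := by
  have h0 : iv p q ⟨0, by have := i.isLt; omega⟩ ∈ H.verts := by
    clear j
    obtain ⟨n, hn⟩ : ∃ n, (i : ℕ) = n := ⟨_, rfl⟩
    induction n generalizing i with
    | zero => convert hx using 2; exact (Fin.ext hn.symm)
    | succ n ih =>
      exact ih ⟨(i:ℕ)-1, by have := i.isLt; omega⟩
        (step_pred hmin p q i hx (by omega)) (by simp; omega)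
  obtain ⟨n, hn⟩ : ∃ n, (j : ℕ) = n := ⟨_, rfl⟩
  induction n generalizing j with
  | zero => convert h0 using 2; exact (Fin.ext hn)
  | succ n ih =>
    have hj' : n < ℓ - 2 := by have := j.isLt; omega
    have hmem := ih ⟨n, hj'⟩ rfl
    have := step_succ hmin p q ⟨n, hj'⟩ hmem (by simpa using hn ▸ j.isLt)
    convert this using 2
    exact Fin.ext (by simpa using hn)

/-- a hub in H forces a full path of its petal -/
lemma hub_force (hℓ : 3 ≤ ℓ) (p) (hx : hb p ∈ H.verts) : ∃ q, (p, q) ∈ TS (H := H) := by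
  obtain ⟨y, hy, hyne⟩ :=
    Set.exists_ne_of_one_lt_ncard (lt_of_lt_of_le one_lt_two (hmin _ hx)) none
  have hy' := (H.neighborSet_subset _) hy
  rcases nbr_hub hℓ p hy' with h | ⟨q, rfl⟩
  · exact absurd h hyne
  · exact ⟨q, ⟨_, hy.snd_mem⟩⟩

/-- nonempty H with min degree 2 has a full path -/
lemma TS_nonempty (hℓ : 3 ≤ ℓ) (hne : H.verts.Nonempty) : (TS (H := H)).Nonempty := by
  obtain ⟨x, hx⟩ := hne
  rcases x with _ | ⟨p, _ | ⟨q, i⟩⟩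
  · -- center
    obtain ⟨y, hy, -⟩ :=
      Set.exists_ne_of_one_lt_ncard (lt_of_lt_of_le one_lt_two (hmin _ hx)) none
    have hyG := (H.neighborSet_subset _) hy
    have hyH : y ∈ H.verts := hy.snd_mem
    -- neighbors of the center are hubs or first internal vertices
    rcases y with _ | ⟨p, _ | ⟨q, i⟩⟩
    · exact absurd hyG (by rintro (⟨hne', h | h⟩ : _ ≠ _ ∧ (_ ∨ _)) <;> simp [cBase] at h)
    · obtain ⟨q, hq⟩ := hub_force hmin hℓ p hyH
      exact ⟨_, hq⟩
    · exact ⟨(p, q), ⟨i, hyH⟩⟩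
  · obtain ⟨q, hq⟩ := hub_force hmin hℓ p hx
    exact ⟨_, hq⟩
  · exact ⟨(p, q), ⟨i, hx⟩⟩

lemma ctr_mem (hℓ : 3 ≤ ℓ) (hne : H.verts.Nonempty) : (none : CV ℓ k r) ∈ H.verts := by
  obtain ⟨⟨p, q⟩, ⟨i, hi⟩⟩ := TS_nonempty hmin hℓ hne
  have h0 : iv p q ⟨0, by have := i.isLt; omega⟩ ∈ H.verts := all_internal hmin p q i hi _
  have := (internal_force hmin p q _ h0).1
  have hp : prevV (ℓ := ℓ) (k := k) (r := r) p q ⟨0, by have := i.isLt; omega⟩ = none := by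
    unfold prevV; rw [dif_pos rfl]
  rw [hp] at this
  exact this.snd_mem

lemma hub_mem (hℓ : 3 ≤ ℓ) (p) (hp : p ∈ PS (H := H)) : hb p ∈ H.verts := by
  obtain ⟨⟨p', q⟩, ⟨i, hi⟩, rfl⟩ := hp
  have hlast : iv p' q ⟨ℓ-3, by omega⟩ ∈ H.verts := all_internal hmin p' q i hi _
  have := (internal_force hmin p' q _ hlast).2
  have hn : nextV (ℓ := ℓ) (k := k) (r := r) p' q ⟨ℓ-3, by omega⟩ = hb p' := by
    unfold nextV; rw [dif_neg (by simp; omega)]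
  rw [hn] at this
  exact this.snd_mem

end MinDeg
end CB

namespace CB

lemma ncard_prod_univ {α β : Type*} [Fintype α] [Fintype β] (s : Set α) :
    (s ×ˢ (Set.univ : Set β)).ncard = s.ncard * Fintype.card β := by
  classical
  rw [Set.ncard_eq_toFinset_card', Set.ncard_eq_toFinset_card']
  simp [Set.toFinset_prod]

variable {ℓ k r : ℕ} {H : (CGraph ℓ k r true).Subgraph}

/-- the internal-vertex embedding -/
def ivm (x : (Fin (r*(k-1)+1) × Fin r) × Fin (ℓ-2)) : CV ℓ k r := iv x.1.1 x.1.2 x.2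

/-- path edges, indexed by the far endpoint -/
def pathE (hℓ : 3 ≤ ℓ) (x : (Fin (r*(k-1)+1) × Fin r) × Fin ((ℓ-2)+1)) : Sym2 (CV ℓ k r) :=
  if h : (x.2 : ℕ) < ℓ-2 then s(prevV x.1.1 x.1.2 ⟨x.2, h⟩, iv x.1.1 x.1.2 ⟨x.2, h⟩)
  else s(iv x.1.1 x.1.2 ⟨ℓ-3, by omega⟩, hb x.1.1)

def starE (p : Fin (r*(k-1)+1)) : Sym2 (CV ℓ k r) := s(none, hb p)

section MinDeg2
variable (hmin : ∀ x ∈ H.verts, 2 ≤ (H.neighborSet x).ncard)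
include hmin

lemma verts_lb (hℓ : 3 ≤ ℓ) (hne : H.verts.Nonempty) :
    1 + (PS (H := H)).ncard + (TS (H := H)).ncard * (ℓ-2) ≤ H.verts.ncard := by
  classical
  set SV : Set (CV ℓ k r) :=
    insert none ((hb '' PS (H := H)) ∪ (ivm '' (TS (H := H) ×ˢ Set.univ))) with hSV
  have hsub : SV ⊆ H.verts := by
    intro y hy
    rcases hy with rfl | hy
    · exact ctr_mem hmin hℓ hne
    rcases hy with ⟨p, hp, rfl⟩ | ⟨⟨⟨p, q⟩, i⟩, ⟨⟨j, hj⟩, -⟩, rfl⟩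
    · exact hub_mem hmin hℓ p hp
    · exact all_internal hmin p q j hj i
  have hcard : SV.ncard = 1 + (PS (H := H)).ncard + (TS (H := H)).ncard * (ℓ-2) := by
    rw [hSV, Set.ncard_insert_of_notMem (by
        rintro (⟨p, -, h⟩ | ⟨x, -, h⟩) <;> simp [hb, ivm, iv] at h) (Set.toFinite _),
      Set.ncard_union_eq (by
        rw [Set.disjoint_left]
        rintro y ⟨p, -, rfl⟩ ⟨x, -, h⟩
        simp [hb, ivm, iv] at h) (Set.toFinite _) (Set.toFinite _),
      Set.ncard_image_of_injective _ (fun a b hab => by simpa [hb] using hab),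
      Set.ncard_image_of_injective _ (fun a b hab => by
        obtain ⟨⟨a1, a2⟩, a3⟩ := a; obtain ⟨⟨b1, b2⟩, b3⟩ := b
        simp [ivm, iv, Prod.ext_iff] at hab ⊢; tauto),
      ncard_prod_univ]
    simp [Fintype.card_fin]
    omega
  calc 1 + (PS (H := H)).ncard + (TS (H := H)).ncard * (ℓ-2) = SV.ncard := hcard.symm
    _ ≤ H.verts.ncard := Set.ncard_le_ncard hsub (Set.toFinite _)

lemma edge_classify_half (hℓ : 3 ≤ ℓ) (a b : CV ℓ k r) (he : H.Adj a b)
    (h : cBase ℓ k r true a b) :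
    s(a, b) ∈ (pathE hℓ '' (TS (H := H) ×ˢ Set.univ)) ∪ (starE '' PS (H := H)) := by
  rcases a with _ | ⟨p, _ | ⟨q, i⟩⟩ <;> rcases b with _ | ⟨p', _ | ⟨q', j⟩⟩
  · exact absurd h (by simp [cBase])
  · -- star edge
    right
    obtain ⟨q, hq⟩ := hub_force hmin hℓ p' he.snd_mem
    exact ⟨p', ⟨(p', q), hq, rfl⟩, rfl⟩
  · -- center to first internal
    left
    have h0 : (j : ℕ) = 0 := h
    refine ⟨((p', q'), ⟨0, by omega⟩), ⟨⟨j, he.snd_mem⟩, trivial⟩, ?_⟩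
    rw [pathE, dif_pos (show (0:ℕ) < ℓ-2 by omega), prevV,
      dif_pos (show (0:ℕ) = 0 from rfl)]
    congr 1
    simp [iv, Prod.ext_iff, Fin.ext_iff]
    omega
  · exact absurd h (by simp [cBase])
  · exact absurd h (by simp [cBase])
  · exact absurd h (by simp [cBase])
  · exact absurd h (by simp [cBase])
  · -- last internal to hub
    obtain ⟨rfl, hi⟩ := h
    left
    refine ⟨((p, q), ⟨ℓ-2, by omega⟩), ⟨⟨i, he.fst_mem⟩, trivial⟩, ?_⟩
    rw [pathE, dif_neg (show ¬(ℓ-2 < ℓ-2) by omega)]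
    congr 1
    simp [iv, hb, Prod.ext_iff, Fin.ext_iff]
    omega
  · -- consecutive internal
    obtain ⟨rfl, rfl, hj⟩ := h
    left
    refine ⟨((p, q), ⟨(j : ℕ), by have := j.isLt; omega⟩), ⟨⟨i, he.fst_mem⟩, trivial⟩, ?_⟩
    rw [pathE, dif_pos (show (j:ℕ) < ℓ-2 from j.isLt), prevV,
      dif_neg (show ¬((j:ℕ) = 0) by omega)]
    congr 1
    simp [iv, Prod.ext_iff, Fin.ext_iff]
    omega

lemma edge_ub (hℓ : 3 ≤ ℓ) :
    H.edgeSet.ncard ≤ (TS (H := H)).ncard * ((ℓ-2)+1) + (PS (H := H)).ncard := by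
  classical
  have hsub : H.edgeSet ⊆
      (pathE hℓ '' (TS (H := H) ×ˢ Set.univ)) ∪ (starE '' PS (H := H)) := by
    intro e he
    induction e with
    | _ a b =>
      rw [SimpleGraph.Subgraph.mem_edgeSet] at he
      rcases (show _ ≠ _ ∧ (_ ∨ _) from H.adj_sub he).2 with h | h
      · exact edge_classify_half hmin hℓ a b he h
      · rw [Sym2.eq_swap]
        exact edge_classify_half hmin hℓ b a he.symm h
  calc H.edgeSet.ncard ≤ _ := Set.ncard_le_ncard hsub (Set.toFinite _)
    _ ≤ (pathE hℓ '' (TS (H := H) ×ˢ Set.univ)).ncard + (starE '' PS (H := H)).ncard :=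
        Set.ncard_union_le _ _
    _ ≤ (TS (H := H) ×ˢ (Set.univ : Set (Fin ((ℓ-2)+1)))).ncard + (PS (H := H)).ncard := by
        gcongr
        · exact Set.ncard_image_le (Set.toFinite _)
        · exact Set.ncard_image_le (Set.toFinite _)
    _ ≤ _ := by rw [ncard_prod_univ]; simp

end MinDeg2

lemma PS_le_TS : (PS (H := H)).ncard ≤ (TS (H := H)).ncard :=
  Set.ncard_image_le (Set.toFinite _)

lemma TS_le : (TS (H := H)).ncard ≤ (PS (H := H)).ncard * r := by
  have hsub : TS (H := H) ⊆ (PS (H := H)) ×ˢ (Set.univ : Set (Fin r)) := by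
    rintro ⟨p, q⟩ h
    exact ⟨⟨(p,q), h, rfl⟩, trivial⟩
  calc (TS (H := H)).ncard ≤ _ := Set.ncard_le_ncard hsub (Set.toFinite _)
    _ = _ := by rw [ncard_prod_univ]; simp

lemma PS_le_K : (PS (H := H)).ncard ≤ r*(k-1)+1 := by
  calc (PS (H := H)).ncard ≤ (Set.univ : Set (Fin (r*(k-1)+1))).ncard :=
        Set.ncard_le_ncard (Set.subset_univ _) (Set.toFinite _)
    _ = _ := by rw [Set.ncard_univ, Nat.card_eq_fintype_card, Fintype.card_fin]

end CB

namespace CB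

lemma arithB (L K rr t pp e v : ℕ)
    (hF1 : e ≤ t*(L+1) + pp) (hF2 : 1 + pp + t*L ≤ v)
    (hF3 : t ≤ rr*pp) (hF4 : pp ≤ K) (hF5 : pp ≤ t) :
    e * (K*(rr*L+1)+1) ≤ (K*(rr*L+rr+1)) * v := by
  rcases Nat.eq_zero_or_pos t with ht | ht
  · subst ht
    have hpp : pp = 0 := by omega
    have he : e = 0 := by omega
    simp [he]
  · have h3 : t ≤ K*rr := le_trans hF3 (by
      calc rr*pp ≤ rr*K := Nat.mul_le_mul_left _ hF4
        _ = K*rr := Nat.mul_comm _ _)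
    have h1 : t*L ≤ K*rr*L := Nat.mul_le_mul_right _ h3
    have h2 : t*K ≤ rr*pp*K := Nat.mul_le_mul_right _ hF3
    have key : (t*(L+1)+pp) * (K*(rr*L+1)+1) ≤ (K*(rr*L+rr+1)) * (1+pp+t*L) := by
      nlinarith [h1, h2, h3, hF4]
    calc e * (K*(rr*L+1)+1) ≤ (t*(L+1)+pp) * (K*(rr*L+1)+1) :=
          Nat.mul_le_mul_right _ hF1
      _ ≤ (K*(rr*L+rr+1)) * (1+pp+t*L) := key
      _ ≤ (K*(rr*L+rr+1)) * v := Nat.mul_le_mul_left _ hF2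

variable {ℓ k r : ℕ}

lemma edge_empty (H : (CGraph ℓ k r true).Subgraph) (hv : H.verts = ∅) :
    H.edgeSet.ncard = 0 := by
  have : H.edgeSet = ∅ := by
    ext e
    induction e with
    | _ a b =>
      simp only [SimpleGraph.Subgraph.mem_edgeSet, Set.mem_empty_iff_false, iff_false]
      intro h
      exact absurd (hv ▸ h.fst_mem) (Set.notMem_empty a)
  simp [this]

lemma main_nat (hℓ : 3 ≤ ℓ) (hk : 3 ≤ k) (hr : 2 ≤ r) :
    ∀ (n : ℕ) (H : (CGraph ℓ k r true).Subgraph), H.verts.ncard ≤ n →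
      H.edgeSet.ncard * ((r*(k-1)+1)*(r*(ℓ-2)+1)+1) ≤
        (CGraph ℓ k r true).edgeSet.ncard * H.verts.ncard := by
  intro n
  induction n with
  | zero =>
    intro H hn
    have hv : H.verts = ∅ := by
      rw [← Set.ncard_eq_zero (Set.toFinite _)]; omega
    simp [edge_empty H hv]
  | succ n ih =>
    intro H hn
    by_cases hdeg : ∃ x ∈ H.verts, (H.neighborSet x).ncard ≤ 1
    · obtain ⟨x, hx, hxdeg⟩ := hdeg
      set H' := H.deleteVerts {x} with hH'
      have hv' : H'.verts.ncard = H.verts.ncard - 1 := verts_del H x hx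
      have hvpos : 0 < H.verts.ncard := (Set.ncard_pos (Set.toFinite _)).2 ⟨x, hx⟩
      have h1 := ih H' (by omega)
      have h2 := edge_del H x
      have hm : (r*(k-1)+1)*(r*(ℓ-2)+1)+1 ≤ (CGraph ℓ k r true).edgeSet.ncard := by
        have := edge_lb (k := k) (r := r) hℓ
        have hKr : 1 ≤ (r*(k-1)+1) * r := Nat.one_le_iff_ne_zero.2 (by positivity)
        nlinarith [this, hKr]
      have hv : H.verts.ncard = H'.verts.ncard + 1 := by omega
      calc H.edgeSet.ncard * ((r*(k-1)+1)*(r*(ℓ-2)+1)+1)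
          ≤ (H'.edgeSet.ncard + (H.neighborSet x).ncard) * ((r*(k-1)+1)*(r*(ℓ-2)+1)+1) :=
            Nat.mul_le_mul_right _ h2
        _ ≤ (H'.edgeSet.ncard + 1) * ((r*(k-1)+1)*(r*(ℓ-2)+1)+1) :=
            Nat.mul_le_mul_right _ (by omega)
        _ = H'.edgeSet.ncard * ((r*(k-1)+1)*(r*(ℓ-2)+1)+1) + ((r*(k-1)+1)*(r*(ℓ-2)+1)+1) := by
            ring
        _ ≤ (CGraph ℓ k r true).edgeSet.ncard * H'.verts.ncard +
              (CGraph ℓ k r true).edgeSet.ncard := add_le_add h1 hm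
        _ = (CGraph ℓ k r true).edgeSet.ncard * (H'.verts.ncard + 1) := by ring
        _ = _ := by rw [← hv]
    · push_neg at hdeg
      have hmin : ∀ x ∈ H.verts, 2 ≤ (H.neighborSet x).ncard := fun x hx => hdeg x hx
      rcases Set.eq_empty_or_nonempty H.verts with hv | hne
      · simp [edge_empty H hv]
      have F1 := edge_ub (H := H) hmin hℓ
      have F2 := verts_lb (H := H) hmin hℓ hne
      have F3 : (TS (H := H)).ncard ≤ r * (PS (H := H)).ncard := by
        exact (TS_le (H := H)).trans_eq (Nat.mul_comm _ _)
      have F4 := PS_le_K (H := H)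
      have F5 := PS_le_TS (H := H)
      calc H.edgeSet.ncard * ((r*(k-1)+1)*(r*(ℓ-2)+1)+1)
          ≤ ((r*(k-1)+1)*(r*(ℓ-2)+r+1)) * H.verts.ncard :=
            arithB (ℓ-2) (r*(k-1)+1) r _ _ _ _ F1 F2 F3 F4 F5
        _ ≤ _ := Nat.mul_le_mul_right _ (edge_lb hℓ)

end CB


/-- For `ℓ ≥ 3`, `k ≥ 3`, `r ≥ 2`, the graph `C_{ℓ,k}^{r*}` is
balanced: every nonempty subgraph `H` satisfies
`e(H)/v(H) ≤ e(C_{ℓ,k}^{r*})/v(C_{ℓ,k}^{r*})`. -/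
theorem CStar_balanced (ℓ k r : ℕ) (hℓ : 3 ≤ ℓ) (hk : 3 ≤ k) (hr : 2 ≤ r) :
    ∀ H : (CGraph ℓ k r true).Subgraph, H.verts.Nonempty →
      (H.edgeSet.ncard : ℚ) / (H.verts.ncard : ℚ) ≤
        ((CGraph ℓ k r true).edgeSet.ncard : ℚ) / (Fintype.card (CV ℓ k r) : ℚ) := by
  
  intro H hne
  have hvpos : 0 < H.verts.ncard := (Set.ncard_pos (Set.toFinite _)).2 hne
  have hnpos : 0 < Fintype.card (CV ℓ k r) := Fintype.card_pos
  rw [div_le_div_iff₀ (by exact_mod_cast hvpos) (by exact_mod_cast hnpos)]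
  have := CB.main_nat hℓ hk hr H.verts.ncard H le_rfl
  rw [CB.card_CV]
  exact_mod_cast this
end

section
/- For integers ℓ ≥ 3 and r ≥ 2, the 2-density of the graph C_{ℓ,k}^{r+} equals (r(ℓ−1)−1)/(r(ℓ−2)), i.e., m₂(C_{ℓ,k}^{r+}) = max over subgraphs H with v(H) ≥ 3 of (e(H)−1)/(v(H)−2) = (r(ℓ−1)−1)/(r(ℓ−2)), with the maximum attained by a single petal. -/
namespace CPlusAux

open Finset

attribute [local instance] Classical.propDecidable

variable (ℓ k r : ℕ)

/-- internal vertex `t` of path `(p,q)` if `t < ℓ-2`, else the outer endpoint. -/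
def pv (p : Fin (r * (k - 1) + 1)) (q : Fin r) (t : ℕ) : CV ℓ k r :=
  if h : t < ℓ - 2 then some (p, some (q, ⟨t, h⟩)) else some (p, none)

/-- lower endpoint of edge `t` of path `(p,q)`. -/
def elo (p : Fin (r * (k - 1) + 1)) (q : Fin r) (t : ℕ) : CV ℓ k r :=
  if t = 0 then none else pv ℓ k r p q (t - 1)

def Φ (p : Fin (r * (k - 1) + 1)) (q : Fin r) (t : ℕ) : Sym2 (CV ℓ k r) :=
  s(elo ℓ k r p q t, pv ℓ k r p q t)

variable {ℓ k r}

lemma cBase_of (hℓ : 3 ≤ ℓ) (p : Fin (r * (k - 1) + 1)) (q : Fin r) {t : ℕ}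
    (ht : t ≤ ℓ - 2) : cBase ℓ k r false (elo ℓ k r p q t) (pv ℓ k r p q t) := by
  rcases Nat.eq_zero_or_pos t with h0 | h0
  · subst h0
    have hn : 0 < ℓ - 2 := by omega
    simp [elo, pv, hn, cBase]
  · rcases eq_or_lt_of_le ht with he | he
    · have h1 : ¬ (t < ℓ - 2) := by omega
      have h2 : t - 1 < ℓ - 2 := by omega
      simp only [elo, pv, h1, h2, dif_pos, dif_neg, if_neg (by omega : ¬ t = 0)]
      exact ⟨rfl, show t - 1 = ℓ - 3 by omega⟩
    · have h2 : t - 1 < ℓ - 2 := by omega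
      simp only [elo, pv, h2, he, dif_pos, if_neg (by omega : ¬ t = 0)]
      exact ⟨rfl, rfl, show t = (t - 1) + 1 by omega⟩

lemma adj_of (hℓ : 3 ≤ ℓ) (p : Fin (r * (k - 1) + 1)) (q : Fin r) {t : ℕ}
    (ht : t ≤ ℓ - 2) : (CGraph ℓ k r false).Adj (elo ℓ k r p q t) (pv ℓ k r p q t) := by
  refine (⟨?_, Or.inl (cBase_of hℓ p q ht)⟩ : _ ≠ _ ∧ _)
  rcases Nat.eq_zero_or_pos t with h0 | h0
  · subst h0; by_cases h1 : 0 < ℓ - 2 <;> simp [elo, pv, h1]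
  · have h2 : t - 1 < ℓ - 2 := by omega
    simp only [elo, pv, dif_pos h2, if_neg (by omega : ¬ t = 0)]
    by_cases h1 : t < ℓ - 2
    · simp only [dif_pos h1]
      simp only [ne_eq, Option.some.injEq, Prod.ext_iff, Fin.ext_iff]
      rintro ⟨-, -, h⟩
      omega
    · simp [dif_neg h1]

/-- every base-adjacent pair comes from some edge triple. -/
lemma cBase_elim (hℓ : 3 ≤ ℓ) {x y : CV ℓ k r} (h : cBase ℓ k r false x y) :
    ∃ p q t, t ≤ ℓ - 2 ∧ x = elo ℓ k r p q t ∧ y = pv ℓ k r p q t := by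
  rcases x with _ | ⟨p, _ | ⟨q, i⟩⟩ <;> rcases y with _ | ⟨p', _ | ⟨q', j⟩⟩ <;>
    simp only [cBase] at h
  · -- none, outer : star = true contradiction
    exact absurd h (by simp)
  · -- none, inner (p', q', j), j = 0
    have hn : 0 < ℓ - 2 := by omega
    refine ⟨p', q', 0, by omega, by simp [elo], ?_⟩
    simp only [pv, dif_pos hn]
    simp [Prod.ext_iff, Fin.ext_iff, h]
  · -- inner, outer
    obtain ⟨hp, hi⟩ := h
    subst hp
    have h2 : ℓ - 2 - 1 < ℓ - 2 := by omega
    refine ⟨p, q, ℓ - 2, le_refl _, ?_, by simp [pv]⟩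
    simp only [elo, if_neg (by omega : ¬ (ℓ - 2) = 0), pv, dif_pos h2]
    simp only [Option.some.injEq, Prod.ext_iff, Fin.ext_iff]
    exact ⟨trivial, trivial, by omega⟩
  · -- inner, inner
    obtain ⟨hp, hq, hj⟩ := h
    subst hp; subst hq
    have hjlt : (j : ℕ) < ℓ - 2 := j.isLt
    have h2 : (j : ℕ) - 1 < ℓ - 2 := by omega
    refine ⟨p, q, (j : ℕ), by omega, ?_, ?_⟩
    · simp only [elo, if_neg (by omega : ¬ (j : ℕ) = 0), pv, dif_pos h2]
      simp only [Option.some.injEq, Prod.ext_iff, Fin.ext_iff]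
      exact ⟨trivial, trivial, by omega⟩
    · simp only [pv, dif_pos hjlt]



open Finset
attribute [local instance] Classical.propDecidable
variable {ℓ k r : ℕ}

lemma elo_zero (p : Fin (r * (k - 1) + 1)) (q : Fin r) : elo ℓ k r p q 0 = none := if_pos rfl

lemma elo_pos (p : Fin (r * (k - 1) + 1)) (q : Fin r) {t : ℕ} (h : t ≠ 0) :
    elo ℓ k r p q t = pv ℓ k r p q (t - 1) := if_neg h

lemma pv_ne_none (p : Fin (r * (k - 1) + 1)) (q : Fin r) (t : ℕ) :
    pv ℓ k r p q t ≠ none := by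
  rw [pv]; split <;> simp

lemma pv_inj (hℓ : 3 ≤ ℓ) {p p' : Fin (r * (k - 1) + 1)} {q q' : Fin r} {t t' : ℕ}
    (ht : t ≤ ℓ - 2) (ht' : t' ≤ ℓ - 2) (h : pv ℓ k r p q t = pv ℓ k r p' q' t') :
    p = p' ∧ t = t' ∧ (t < ℓ - 2 → q = q') := by
  by_cases h1 : t < ℓ - 2 <;> by_cases h2 : t' < ℓ - 2
  · rw [pv, pv, dif_pos h1, dif_pos h2] at h
    simp only [Option.some.injEq, Prod.ext_iff, Fin.ext_iff] at h
    exact ⟨Fin.ext h.1, h.2.2, fun _ => Fin.ext h.2.1⟩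
  · rw [pv, pv, dif_pos h1, dif_neg h2] at h
    exact absurd h (by simp)
  · rw [pv, pv, dif_neg h1, dif_pos h2] at h
    exact absurd h (by simp)
  · rw [pv, pv, dif_neg h1, dif_neg h2] at h
    simp only [Option.some.injEq, Prod.ext_iff, Fin.ext_iff] at h
    exact ⟨Fin.ext h.1, by omega, fun hc => absurd hc h1⟩

lemma Φ_inj (hℓ : 3 ≤ ℓ) {p p' : Fin (r * (k - 1) + 1)} {q q' : Fin r} {t t' : ℕ}
    (ht : t ≤ ℓ - 2) (ht' : t' ≤ ℓ - 2) (h : Φ ℓ k r p q t = Φ ℓ k r p' q' t') :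
    p = p' ∧ q = q' ∧ t = t' := by
  rw [Φ, Φ, Sym2.eq_iff] at h
  rcases h with ⟨h1, h2⟩ | ⟨h1, h2⟩
  · -- straight
    rcases Nat.eq_zero_or_pos t with h0 | h0
    · subst h0
      have ht'0 : t' = 0 := by
        by_contra hne
        rw [elo_zero, elo_pos _ _ hne] at h1
        exact absurd h1.symm (pv_ne_none _ _ _)
      subst ht'0
      have hn : 0 < ℓ - 2 := by omega
      obtain ⟨hp, -, hq⟩ := pv_inj hℓ (by omega) (by omega) h2
      exact ⟨hp, hq hn, rfl⟩
    · have ht'0 : t' ≠ 0 := by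
        rintro rfl
        rw [elo_zero, elo_pos _ _ (by omega : t ≠ 0)] at h1
        exact absurd h1 (pv_ne_none _ _ _)
      rw [elo_pos _ _ (by omega : t ≠ 0), elo_pos _ _ ht'0] at h1
      obtain ⟨hp, htt, hq⟩ := pv_inj hℓ (by omega) (by omega) h1
      obtain rfl : t = t' := by omega
      obtain ⟨-, -, hq'⟩ := pv_inj hℓ ht ht' h2
      rcases Nat.lt_or_ge t (ℓ - 2) with hlt | hge
      · exact ⟨hp, hq' hlt, rfl⟩
      · exact ⟨hp, hq (by omega), rfl⟩
  · -- crossed: impossible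
    exfalso
    have ht0 : t ≠ 0 := by
      rintro rfl
      rw [elo_zero] at h1
      exact absurd h1.symm (pv_ne_none _ _ _)
    have ht'0 : t' ≠ 0 := by
      rintro rfl
      rw [elo_zero] at h2
      exact absurd h2 (pv_ne_none _ _ _)
    rw [elo_pos _ _ ht0] at h1
    rw [elo_pos _ _ ht'0] at h2
    obtain ⟨-, htt1, -⟩ := pv_inj hℓ (by omega) ht' h1
    obtain ⟨-, htt2, -⟩ := pv_inj hℓ ht (by omega) h2
    omega

noncomputable def EF (H : (CGraph ℓ k r false).Subgraph) (p : Fin (r * (k - 1) + 1))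
    (q : Fin r) : Finset ℕ :=
  (range (ℓ - 1)).filter (fun t => Φ ℓ k r p q t ∈ H.edgeSet)

noncomputable def IF (H : (CGraph ℓ k r false).Subgraph) (p : Fin (r * (k - 1) + 1))
    (q : Fin r) : Finset ℕ :=
  (range (ℓ - 2)).filter (fun i => pv ℓ k r p q i ∈ H.verts)

noncomputable def BF (H : (CGraph ℓ k r false).Subgraph) : Finset (Fin (r * (k - 1) + 1)) :=
  univ.filter (fun p => (some (p, none) : CV ℓ k r) ∈ H.verts)

noncomputable def cF (H : (CGraph ℓ k r false).Subgraph) : ℕ :=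
  if (none : CV ℓ k r) ∈ H.verts then 1 else 0

lemma edge_count (hℓ : 3 ≤ ℓ) (H : (CGraph ℓ k r false).Subgraph) :
    H.edgeSet.ncard = ∑ pq : Fin (r * (k - 1) + 1) × Fin r, (EF H pq.1 pq.2).card := by
  classical
  have hfin : H.edgeSet.Finite := Set.toFinite _
  rw [Set.ncard_eq_toFinset_card _ hfin, ← Finset.card_sigma]
  refine (Finset.card_bij (fun a _ => Φ ℓ k r a.1.1 a.1.2 a.2) ?_ ?_ ?_).symm
  · rintro ⟨pq, t⟩ ha
    dsimp only
    simp only [Finset.mem_sigma, EF, Finset.mem_filter] at ha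
    exact hfin.mem_toFinset.mpr ha.2.2
  · rintro ⟨pq, t⟩ ha ⟨pq', t'⟩ ha' h
    dsimp only at h
    simp only [Finset.mem_sigma, EF, Finset.mem_filter, Finset.mem_range] at ha ha'
    obtain ⟨ht, -⟩ := ha.2
    obtain ⟨ht', -⟩ := ha'.2
    obtain ⟨hp, hq, htt⟩ := Φ_inj hℓ (by omega) (by omega) h
    simp only [Sigma.mk.inj_iff, Prod.ext_iff]
    exact ⟨⟨hp, hq⟩, heq_of_eq htt⟩
  · intro e he
    have heG : e ∈ (CGraph ℓ k r false).edgeSet := H.edgeSet_subset (hfin.mem_toFinset.mp he)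
    induction e using Sym2.ind with
    | _ x y =>
      have hadj : (CGraph ℓ k r false).Adj x y := heG
      rcases (show x ≠ y ∧ (cBase ℓ k r false x y ∨ cBase ℓ k r false y x) from hadj).2 with hb | hb
      · obtain ⟨p, q, t, ht, hx, hy⟩ := cBase_elim hℓ hb
        have he2 : s(x, y) = Φ ℓ k r p q t := by rw [hx, hy]; rfl
        refine ⟨⟨(p, q), t⟩, ?_, he2.symm⟩
        simp only [Finset.mem_sigma, Finset.mem_univ, EF, Finset.mem_filter,
          Finset.mem_range, true_and]
        exact ⟨by omega, he2 ▸ hfin.mem_toFinset.mp he⟩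
      · obtain ⟨p, q, t, ht, hy, hx⟩ := cBase_elim hℓ hb
        have he2 : s(x, y) = Φ ℓ k r p q t := by rw [hx, hy, Sym2.eq_swap]; rfl
        refine ⟨⟨(p, q), t⟩, ?_, he2.symm⟩
        simp only [Finset.mem_sigma, Finset.mem_univ, EF, Finset.mem_filter,
          Finset.mem_range, true_and]
        exact ⟨by omega, he2 ▸ hfin.mem_toFinset.mp he⟩

lemma vert_count (hℓ : 3 ≤ ℓ) (H : (CGraph ℓ k r false).Subgraph) :
    H.verts.ncard = cF H + (BF H).card +
      ∑ pq : Fin (r * (k - 1) + 1) × Fin r, (IF H pq.1 pq.2).card := by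
  classical
  have hfin : H.verts.Finite := Set.toFinite _
  rw [Set.ncard_eq_toFinset_card _ hfin]
  have hsplit1 := Finset.card_filter_add_card_filter_not
    (s := hfin.toFinset) (p := fun x => x = (none : CV ℓ k r))
  have hsplit2 := Finset.card_filter_add_card_filter_not
    (s := hfin.toFinset.filter (fun x => ¬ x = (none : CV ℓ k r)))
    (p := fun x => ∃ p, x = (some (p, none) : CV ℓ k r))
  have e1 : (hfin.toFinset.filter (fun x => x = (none : CV ℓ k r))).card = cF H := by
    by_cases hc : (none : CV ℓ k r) ∈ H.verts
    · have h5 : hfin.toFinset.filter (fun x => x = (none : CV ℓ k r)) = {(none : CV ℓ k r)} := by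
        ext x
        simp only [Finset.mem_filter, Set.Finite.mem_toFinset, Finset.mem_singleton]
        exact ⟨fun h => h.2, fun h => ⟨h ▸ hc, h⟩⟩
      rw [h5, cF, if_pos hc, Finset.card_singleton]
    · have h5 : hfin.toFinset.filter (fun x => x = (none : CV ℓ k r)) = ∅ := by
        ext x
        simp only [Finset.mem_filter, Set.Finite.mem_toFinset, Finset.notMem_empty,
          iff_false, not_and]
        rintro hx rfl
        exact hc hx
      rw [h5, cF, if_neg hc, Finset.card_empty]
  have e2 : ((hfin.toFinset.filter (fun x => ¬ x = (none : CV ℓ k r))).filter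
      (fun x => ∃ p, x = (some (p, none) : CV ℓ k r))).card = (BF H).card := by
    refine (Finset.card_bij (fun p _ => (some (p, none) : CV ℓ k r)) ?_ ?_ ?_).symm
    · intro p hp
      simp only [BF, Finset.mem_filter, Finset.mem_univ, true_and] at hp
      simp only [Finset.mem_filter, Set.Finite.mem_toFinset]
      exact ⟨⟨hp, by simp⟩, p, rfl⟩
    · intro p _ p' _ h
      simpa using h
    · rintro x hx
      simp only [Finset.mem_filter] at hx
      obtain ⟨⟨hxF, -⟩, p, rfl⟩ := hx
      refine ⟨p, ?_, rfl⟩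
      simp only [BF, Finset.mem_filter, Finset.mem_univ, true_and]
      exact hfin.mem_toFinset.mp hxF
  have e3 : ((hfin.toFinset.filter (fun x => ¬ x = (none : CV ℓ k r))).filter
      (fun x => ¬ ∃ p, x = (some (p, none) : CV ℓ k r))).card =
      ∑ pq : Fin (r * (k - 1) + 1) × Fin r, (IF H pq.1 pq.2).card := by
    rw [← Finset.card_sigma]
    refine (Finset.card_bij (fun a _ => pv ℓ k r a.1.1 a.1.2 a.2) ?_ ?_ ?_).symm
    · rintro ⟨pq, i⟩ ha
      dsimp only
      simp only [Finset.mem_sigma, IF, Finset.mem_filter, Finset.mem_range] at ha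
      obtain ⟨-, hi, hv⟩ := ha
      simp only [Finset.mem_filter, Set.Finite.mem_toFinset]
      refine ⟨⟨hv, by simp [pv, dif_pos hi]⟩, ?_⟩
      simp [pv, dif_pos hi]
    · rintro ⟨pq, i⟩ ha ⟨pq', i'⟩ ha' h
      dsimp only at h
      simp only [Finset.mem_sigma, IF, Finset.mem_filter, Finset.mem_range] at ha ha'
      obtain ⟨-, hi, -⟩ := ha
      obtain ⟨-, hi', -⟩ := ha'
      obtain ⟨hp, hii, hq⟩ := pv_inj hℓ (by omega) (by omega) h
      simp only [Sigma.mk.inj_iff, Prod.ext_iff]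
      exact ⟨⟨hp, hq hi⟩, heq_of_eq hii⟩
    · rintro x hx
      simp only [Finset.mem_filter] at hx
      obtain ⟨⟨hxF, hx1⟩, hx2⟩ := hx
      rcases x with _ | ⟨p, _ | ⟨q, i⟩⟩
      · exact absurd rfl hx1
      · exact absurd ⟨p, rfl⟩ hx2
      · refine ⟨⟨(p, q), (i : ℕ)⟩, ?_, by simp [pv, dif_pos i.isLt]⟩
        simp only [Finset.mem_sigma, Finset.mem_univ, IF, Finset.mem_filter,
          Finset.mem_range, true_and]
        refine ⟨i.isLt, ?_⟩
        have hh : pv ℓ k r p q (i : ℕ) = some (p, some (q, i)) := by simp [pv, dif_pos i.isLt]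
        rw [hh]
        exact hfin.mem_toFinset.mp hxF
  rw [← hsplit1, ← hsplit2, e1, e2, e3, Nat.add_assoc]



open Finset
attribute [local instance] Classical.propDecidable
variable {ℓ k r : ℕ}

lemma EF_adj (hℓ : 3 ≤ ℓ) {H : (CGraph ℓ k r false).Subgraph} {p : Fin (r * (k - 1) + 1)}
    {q : Fin r} {t : ℕ} (h : t ∈ EF H p q) :
    t < ℓ - 1 ∧ H.Adj (elo ℓ k r p q t) (pv ℓ k r p q t) := by
  simp only [EF, Finset.mem_filter, Finset.mem_range] at h
  exact ⟨h.1, (SimpleGraph.Subgraph.mem_edgeSet).mp h.2⟩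

lemma closure1 (hℓ : 3 ≤ ℓ) {H : (CGraph ℓ k r false).Subgraph} {p : Fin (r * (k - 1) + 1)}
    {q : Fin r} {t : ℕ} (h : t ∈ EF H p q) (h1 : 1 ≤ t) : t - 1 ∈ IF H p q := by
  obtain ⟨ht, hadj⟩ := EF_adj hℓ h
  have hm := H.edge_vert hadj
  rw [elo_pos _ _ (by omega : t ≠ 0)] at hm
  simp only [IF, Finset.mem_filter, Finset.mem_range]
  exact ⟨by omega, hm⟩

lemma closure2 (hℓ : 3 ≤ ℓ) {H : (CGraph ℓ k r false).Subgraph} {p : Fin (r * (k - 1) + 1)}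
    {q : Fin r} {t : ℕ} (h : t ∈ EF H p q) (h2 : t < ℓ - 2) : t ∈ IF H p q := by
  obtain ⟨ht, hadj⟩ := EF_adj hℓ h
  have hm := H.edge_vert hadj.symm
  simp only [IF, Finset.mem_filter, Finset.mem_range]
  exact ⟨h2, hm⟩

lemma closure0 (hℓ : 3 ≤ ℓ) {H : (CGraph ℓ k r false).Subgraph} {p : Fin (r * (k - 1) + 1)}
    {q : Fin r} (h : 0 ∈ EF H p q) : cF H = 1 := by
  obtain ⟨-, hadj⟩ := EF_adj hℓ h
  have hm := H.edge_vert hadj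
  rw [elo_zero] at hm
  rw [cF, if_pos hm]

lemma closureTop (hℓ : 3 ≤ ℓ) {H : (CGraph ℓ k r false).Subgraph} {p : Fin (r * (k - 1) + 1)}
    {q : Fin r} (h : ℓ - 2 ∈ EF H p q) : p ∈ BF H := by
  obtain ⟨-, hadj⟩ := EF_adj hℓ h
  have hm := H.edge_vert hadj.symm
  rw [pv, dif_neg (by omega : ¬ ℓ - 2 < ℓ - 2)] at hm
  simp only [BF, Finset.mem_filter, Finset.mem_univ, true_and]
  exact hm

/-- abstract path lemma: `|E| ≤ |I| + 1`. -/
lemma pathA {E I : Finset ℕ} (h1 : ∀ t ∈ E, 1 ≤ t → t - 1 ∈ I) :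
    E.card ≤ I.card + 1 := by
  have hle : (E.erase 0).card ≤ I.card := by
    apply Finset.card_le_card_of_injOn (fun t => t - 1)
    · intro t ht
      rw [Finset.mem_coe, Finset.mem_erase] at ht
      exact h1 t ht.2 (by omega)
    · intro a ha b hb hab
      rw [Finset.mem_coe, Finset.mem_erase] at ha hb
      change a - 1 = b - 1 at hab
      omega
  calc E.card ≤ (insert 0 (E.erase 0)).card :=
        Finset.card_le_card (Finset.subset_insert_iff.mpr (Finset.Subset.refl _))
    _ ≤ (E.erase 0).card + 1 := Finset.card_insert_le _ _
    _ ≤ I.card + 1 := by omega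

/-- abstract path lemma: if `E` is not the full path then `|E| ≤ |I|`. -/
lemma pathB {n : ℕ} {E I : Finset ℕ} (hE : E ⊆ Finset.range (n + 1))
    (hne : E ≠ Finset.range (n + 1))
    (h1 : ∀ t ∈ E, 1 ≤ t → t - 1 ∈ I) (h2 : ∀ t ∈ E, t < n → t ∈ I) :
    E.card ≤ I.card := by
  by_cases h0 : 0 ∈ E
  · have hC : ((Finset.range (n + 1)) \ E).Nonempty := by
      rw [Finset.sdiff_nonempty]
      intro hsub
      exact hne (Finset.Subset.antisymm hE hsub)
    set s := ((Finset.range (n + 1)) \ E).min' hC with hs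
    have hsmem := Finset.min'_mem _ hC
    rw [← hs, Finset.mem_sdiff, Finset.mem_range] at hsmem
    have hs1 : 1 ≤ s := by
      rcases Nat.eq_zero_or_pos s with h | h
      · exact absurd h0 (by rw [← h]; exact hsmem.2)
      · exact h
    apply Finset.card_le_card_of_injOn (fun t => if t < s then t else t - 1)
    · intro t ht
      by_cases hts : t < s
      · simp only [if_pos hts]
        exact h2 t ht (by omega)
      · simp only [if_neg hts]
        have : t ≠ s := fun h => hsmem.2 (h ▸ ht)
        exact h1 t ht (by omega)
    · intro a ha b hb hab
      rw [Finset.mem_coe] at ha hb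
      have ha' : a ≠ s := fun h => hsmem.2 (h ▸ ha)
      have hb' : b ≠ s := fun h => hsmem.2 (h ▸ hb)
      change (if a < s then a else a - 1) = (if b < s then b else b - 1) at hab
      split_ifs at hab <;> omega
  · apply Finset.card_le_card_of_injOn (fun t => t - 1)
    · intro t ht
      have : t ≠ 0 := fun h => h0 (h ▸ ht)
      exact h1 t ht (by omega)
    · intro a ha b hb hab
      rw [Finset.mem_coe] at ha hb
      have ha' : a ≠ 0 := fun h => h0 (h ▸ ha)
      have hb' : b ≠ 0 := fun h => h0 (h ▸ hb)
      change a - 1 = b - 1 at hab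
      omega

/-- abstract path lemma: if `E` avoids both hub edges and is nonempty, `|E| + 1 ≤ |I|`. -/
lemma pathC {n : ℕ} {E I : Finset ℕ} (hE : E ⊆ Finset.range (n + 1))
    (hne : E.Nonempty) (h0 : 0 ∉ E) (hn : n ∉ E)
    (h1 : ∀ t ∈ E, 1 ≤ t → t - 1 ∈ I) (h2 : ∀ t ∈ E, t < n → t ∈ I) :
    E.card + 1 ≤ I.card := by
  set m := E.min' hne with hm
  have hmE : m ∈ E := Finset.min'_mem _ _
  have hm1 : 1 ≤ m := by
    rcases Nat.eq_zero_or_pos m with h | h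
    · exact absurd (h ▸ hmE) h0
    · exact h
  have hsub : insert (m - 1) E ⊆ I := by
    intro x hx
    rcases Finset.mem_insert.mp hx with rfl | hxE
    · exact h1 m hmE hm1
    · have hxr := Finset.mem_range.mp (hE hxE)
      have : x ≠ n := fun h => hn (h ▸ hxE)
      exact h2 x hxE (by omega)
  have hnotmem : m - 1 ∉ E := by
    intro hmem
    have := Finset.min'_le _ _ hmem
    omega
  calc E.card + 1 = (insert (m - 1) E).card := (Finset.card_insert_of_notMem hnotmem).symm
    _ ≤ I.card := Finset.card_le_card hsub



open Finset
attribute [local instance] Classical.propDecidable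
variable {ℓ k r : ℕ}

lemma main_ineq (hℓ : 3 ≤ ℓ) (hr : 2 ≤ r) (H : (CGraph ℓ k r false).Subgraph)
    (hv : 3 ≤ H.verts.ncard) :
    r * (ℓ - 2) * H.edgeSet.ncard + 2 * (r * (ℓ - 1) - 1) ≤
      (r * (ℓ - 1) - 1) * H.verts.ncard + r * (ℓ - 2) := by
  classical
  obtain ⟨m, rfl⟩ : ∃ m, ℓ = m + 3 := ⟨ℓ - 3, by omega⟩
  obtain ⟨s, rfl⟩ : ∃ s, r = s + 2 := ⟨r - 2, by omega⟩
  have hℓ' : (3 : ℕ) ≤ m + 3 := by omega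
  rw [edge_count hℓ' H]
  rw [vert_count hℓ' H] at hv ⊢
  rw [show (m + 3 - 2) = m + 1 from by omega, show (m + 3 - 1) = m + 2 from by omega,
    show (s + 2) * (m + 2) - 1 = (s + 2) * (m + 1) + (s + 1) from by
      have : (s + 2) * (m + 2) = (s + 2) * (m + 1) + (s + 2) := by ring
      omega]
  set D := (s + 2) * (m + 1) with hD
  have hcl1 : ∀ (pq : Fin ((s + 2) * (k - 1) + 1) × Fin (s + 2)),
      ∀ t ∈ EF H pq.1 pq.2, 1 ≤ t → t - 1 ∈ IF H pq.1 pq.2 :=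
    fun pq t ht h1 => closure1 hℓ' ht h1
  have hcl2 : ∀ (pq : Fin ((s + 2) * (k - 1) + 1) × Fin (s + 2)),
      ∀ t ∈ EF H pq.1 pq.2, t < m + 1 → t ∈ IF H pq.1 pq.2 :=
    fun pq t ht h2 => closure2 hℓ' ht h2
  have hEsub : ∀ (pq : Fin ((s + 2) * (k - 1) + 1) × Fin (s + 2)),
      EF H pq.1 pq.2 ⊆ range ((m + 1) + 1) :=
    fun pq => Finset.filter_subset _ _
  have hnotfull : ∀ pq : Fin ((s + 2) * (k - 1) + 1) × Fin (s + 2), EF H pq.1 pq.2 ≠ range ((m + 1) + 1) →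
      (EF H pq.1 pq.2).card ≤ (IF H pq.1 pq.2).card := by
    intro pq hne
    exact pathB (hEsub pq) hne (hcl1 pq) (hcl2 pq)
  set Ffull := (univ : Finset (Fin ((s + 2) * (k - 1) + 1) × Fin (s + 2))).filter
      (fun pq => EF H pq.1 pq.2 = range ((m + 1) + 1)) with hFf
  have hpp : ∀ pq : Fin ((s + 2) * (k - 1) + 1) × Fin (s + 2), D * (EF H pq.1 pq.2).card ≤
      (D + (s + 1)) * (IF H pq.1 pq.2).card + (if pq ∈ Ffull then m + 1 else 0) := by
    intro pq
    by_cases hfull : pq ∈ Ffull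
    · rw [if_pos hfull]
      have hEeq : EF H pq.1 pq.2 = range ((m + 1) + 1) := (Finset.mem_filter.mp hfull).2
      have hecv : (EF H pq.1 pq.2).card = (m + 1) + 1 := by rw [hEeq, Finset.card_range]
      have hpa := pathA (hcl1 pq)
      have hicv : m + 1 ≤ (IF H pq.1 pq.2).card := by omega
      calc D * (EF H pq.1 pq.2).card = (D + (s + 1)) * (m + 1) + (m + 1) := by
            rw [hecv, hD]; ring
        _ ≤ (D + (s + 1)) * (IF H pq.1 pq.2).card + (m + 1) := by
            have := Nat.mul_le_mul_left (D + (s + 1)) hicv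
            omega
    · rw [if_neg hfull]
      have h := hnotfull pq (fun hc => hfull (Finset.mem_filter.mpr ⟨Finset.mem_univ _, hc⟩))
      calc D * (EF H pq.1 pq.2).card ≤ (D + (s + 1)) * (EF H pq.1 pq.2).card :=
            Nat.mul_le_mul_right _ (by omega)
        _ ≤ (D + (s + 1)) * (IF H pq.1 pq.2).card := Nat.mul_le_mul_left _ h
        _ ≤ _ := Nat.le_add_right _ _
  have hsum : D * (∑ pq : Fin ((s + 2) * (k - 1) + 1) × Fin (s + 2), (EF H pq.1 pq.2).card) ≤
      (D + (s + 1)) * (∑ pq : Fin ((s + 2) * (k - 1) + 1) × Fin (s + 2), (IF H pq.1 pq.2).card) +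
        Ffull.card * (m + 1) := by
    calc D * (∑ pq : Fin ((s + 2) * (k - 1) + 1) × Fin (s + 2), (EF H pq.1 pq.2).card)
        = ∑ pq : Fin ((s + 2) * (k - 1) + 1) × Fin (s + 2), D * (EF H pq.1 pq.2).card :=
          Finset.mul_sum _ _ _
      _ ≤ ∑ pq : Fin ((s + 2) * (k - 1) + 1) × Fin (s + 2),
            ((D + (s + 1)) * (IF H pq.1 pq.2).card + (if pq ∈ Ffull then m + 1 else 0)) :=
          Finset.sum_le_sum (fun pq _ => hpp pq)
      _ = (∑ pq : Fin ((s + 2) * (k - 1) + 1) × Fin (s + 2),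
            (D + (s + 1)) * (IF H pq.1 pq.2).card) +
          ∑ pq : Fin ((s + 2) * (k - 1) + 1) × Fin (s + 2),
            (if pq ∈ Ffull then m + 1 else 0) := Finset.sum_add_distrib
      _ = _ := by
          rw [← Finset.mul_sum, Finset.sum_ite_mem, Finset.univ_inter, Finset.sum_const,
            smul_eq_mul]
  by_cases hFne : Ffull.Nonempty
  · -- some full path: center and petal endpoints present
    obtain ⟨pq1, hpq1⟩ := hFne
    have hEeq1 : EF H pq1.1 pq1.2 = range ((m + 1) + 1) := (Finset.mem_filter.mp hpq1).2
    have h0mem : (0 : ℕ) ∈ EF H pq1.1 pq1.2 := by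
      rw [hEeq1]; exact Finset.mem_range.mpr (by omega)
    have hcF : cF H = 1 := closure0 hℓ' h0mem
    have hBmem : ∀ pq ∈ Ffull, pq.1 ∈ BF H := by
      intro pq hpq
      have hEeq : EF H pq.1 pq.2 = range ((m + 1) + 1) := (Finset.mem_filter.mp hpq).2
      apply closureTop hℓ' (q := pq.2)
      rw [show (m + 3 - 2) = m + 1 from by omega, hEeq]
      exact Finset.mem_range.mpr (by omega)
    have hb1 : 1 ≤ (BF H).card := Finset.card_pos.mpr ⟨pq1.1, hBmem pq1 hpq1⟩
    have hFcard : Ffull.card ≤ (BF H).card * (s + 2) := by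
      calc Ffull.card ≤ ((BF H) ×ˢ (univ : Finset (Fin (s + 2)))).card := by
            apply Finset.card_le_card
            intro pq hpq
            rw [Finset.mem_product]
            exact ⟨hBmem pq hpq, Finset.mem_univ _⟩
        _ = (BF H).card * (s + 2) := by
            rw [Finset.card_product, Finset.card_univ, Fintype.card_fin]
    rw [hcF]
    have hFD : Ffull.card * (m + 1) ≤ (BF H).card * D := by
      calc Ffull.card * (m + 1) ≤ ((BF H).card * (s + 2)) * (m + 1) :=
            Nat.mul_le_mul_right _ hFcard
        _ = (BF H).card * D := by rw [hD]; ring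
    have hbD : (BF H).card * D + (s + 1) ≤ (BF H).card * (D + (s + 1)) := by
      obtain ⟨b', hb'⟩ : ∃ b', (BF H).card = b' + 1 := ⟨(BF H).card - 1, by omega⟩
      rw [hb']
      have h2 : b' * D ≤ b' * (D + (s + 1)) := Nat.mul_le_mul_left _ (by omega)
      have h3 : (b' + 1) * D = b' * D + D := by ring
      have h4 : (b' + 1) * (D + (s + 1)) = b' * (D + (s + 1)) + D + (s + 1) := by ring
      omega
    have hexp : (D + (s + 1)) *
        (1 + (BF H).card + ∑ pq : Fin ((s + 2) * (k - 1) + 1) × Fin (s + 2),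
          (IF H pq.1 pq.2).card) =
        (D + (s + 1)) + (BF H).card * (D + (s + 1)) +
          (D + (s + 1)) * (∑ pq : Fin ((s + 2) * (k - 1) + 1) × Fin (s + 2),
            (IF H pq.1 pq.2).card) := by ring
    omega
  · -- no full path
    have hF0 : Ffull.card = 0 := by
      rw [Finset.card_eq_zero, ← Finset.not_nonempty_iff_eq_empty]
      exact hFne
    rw [hF0] at hsum
    by_cases hcb : 2 ≤ cF H + (BF H).card
    · have hexp : (D + (s + 1)) * (cF H + (BF H).card +
          ∑ pq : Fin ((s + 2) * (k - 1) + 1) × Fin (s + 2), (IF H pq.1 pq.2).card) =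
          (D + (s + 1)) * (cF H + (BF H).card) +
          (D + (s + 1)) * (∑ pq : Fin ((s + 2) * (k - 1) + 1) × Fin (s + 2),
            (IF H pq.1 pq.2).card) := by ring
      have h2 : (D + (s + 1)) * 2 ≤ (D + (s + 1)) * (cF H + (BF H).card) :=
        Nat.mul_le_mul_left _ hcb
      omega
    · by_cases hex : ∃ pq : Fin ((s + 2) * (k - 1) + 1) × Fin (s + 2),
          (EF H pq.1 pq.2).Nonempty
      · obtain ⟨pq0, hpq0⟩ := hex
        have hec0 : 1 ≤ (EF H pq0.1 pq0.2).card := Finset.card_pos.mpr hpq0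
        have hnf0 : EF H pq0.1 pq0.2 ≠ range ((m + 1) + 1) := by
          intro hc
          exact hFne ⟨pq0, Finset.mem_filter.mpr ⟨Finset.mem_univ _, hc⟩⟩
        have hic0 : (EF H pq0.1 pq0.2).card ≤ (IF H pq0.1 pq0.2).card := hnotfull pq0 hnf0
        have hrest : ∀ pq : Fin ((s + 2) * (k - 1) + 1) × Fin (s + 2), D * (EF H pq.1 pq.2).card ≤ (D + (s + 1)) * (IF H pq.1 pq.2).card := by
          intro pq
          have h := hpp pq
          have hnm : pq ∉ Ffull := fun hc => hFne ⟨pq, hc⟩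
          rw [if_neg hnm] at h
          exact h
        have hsplit_e := Finset.add_sum_erase univ
          (fun pq : Fin ((s + 2) * (k - 1) + 1) × Fin (s + 2) => (EF H pq.1 pq.2).card)
          (Finset.mem_univ pq0)
        have hsplit_i := Finset.add_sum_erase univ
          (fun pq : Fin ((s + 2) * (k - 1) + 1) × Fin (s + 2) => (IF H pq.1 pq.2).card)
          (Finset.mem_univ pq0)
        have hrest_sum : D * (∑ pq ∈ univ.erase pq0, (EF H pq.1 pq.2).card) ≤
            (D + (s + 1)) * (∑ pq ∈ univ.erase pq0, (IF H pq.1 pq.2).card) := by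
          rw [Finset.mul_sum, Finset.mul_sum]
          exact Finset.sum_le_sum (fun pq _ => hrest pq)
        have hsum_e : D * (∑ pq : Fin ((s + 2) * (k - 1) + 1) × Fin (s + 2),
            (EF H pq.1 pq.2).card) = D * (EF H pq0.1 pq0.2).card +
            D * (∑ pq ∈ univ.erase pq0, (EF H pq.1 pq.2).card) := by
          rw [← hsplit_e]; ring
        have hsum_i : (D + (s + 1)) * (∑ pq : Fin ((s + 2) * (k - 1) + 1) × Fin (s + 2),
            (IF H pq.1 pq.2).card) = (D + (s + 1)) * (IF H pq0.1 pq0.2).card +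
            (D + (s + 1)) * (∑ pq ∈ univ.erase pq0, (IF H pq.1 pq.2).card) := by
          rw [← hsplit_i]; ring
        have h01 : cF H + (BF H).card = 0 ∨ cF H + (BF H).card = 1 := by omega
        rcases h01 with h1cb | h1cb
        · -- cF + b = 0 : path avoids both hubs
          have h0not : (0 : ℕ) ∉ EF H pq0.1 pq0.2 := by
            intro hc
            have := closure0 hℓ' hc
            omega
          have hnnot : (m + 1) ∉ EF H pq0.1 pq0.2 := by
            intro hc
            have hm : pq0.1 ∈ BF H := by
              apply closureTop hℓ' (q := pq0.2)
              rw [show (m + 3 - 2) = m + 1 from by omega]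
              exact hc
            have : 1 ≤ (BF H).card := Finset.card_pos.mpr ⟨pq0.1, hm⟩
            omega
          have hC := pathC (hEsub pq0) hpq0 h0not hnnot (hcl1 pq0) (hcl2 pq0)
          have hexp : (D + (s + 1)) * (cF H + (BF H).card +
              ∑ pq : Fin ((s + 2) * (k - 1) + 1) × Fin (s + 2), (IF H pq.1 pq.2).card) =
              (D + (s + 1)) * (cF H + (BF H).card) +
              (D + (s + 1)) * (∑ pq : Fin ((s + 2) * (k - 1) + 1) × Fin (s + 2),
                (IF H pq.1 pq.2).card) := by ring
          have hexp1 : (D + (s + 1)) * (cF H + (BF H).card) = 0 := by rw [h1cb]; ring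
          have hstrong : D * (EF H pq0.1 pq0.2).card + D + 2 * (s + 1) ≤
              (D + (s + 1)) * (IF H pq0.1 pq0.2).card := by
            have h1 : (D + (s + 1)) * ((EF H pq0.1 pq0.2).card + 1) ≤
                (D + (s + 1)) * (IF H pq0.1 pq0.2).card := Nat.mul_le_mul_left _ (by omega)
            have h2 : (D + (s + 1)) * ((EF H pq0.1 pq0.2).card + 1) =
                D * (EF H pq0.1 pq0.2).card + D + (s + 1) * (EF H pq0.1 pq0.2).card +
                  (s + 1) := by ring
            have h3 : s + 1 ≤ (s + 1) * (EF H pq0.1 pq0.2).card :=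
              Nat.le_mul_of_pos_right _ (by omega)
            omega
          omega
        · -- cF + b = 1
          have hstrong : D * (EF H pq0.1 pq0.2).card + (s + 1) ≤
              (D + (s + 1)) * (IF H pq0.1 pq0.2).card := by
            have h1 : (D + (s + 1)) * (EF H pq0.1 pq0.2).card ≤
                (D + (s + 1)) * (IF H pq0.1 pq0.2).card := Nat.mul_le_mul_left _ hic0
            have h2 : (D + (s + 1)) * (EF H pq0.1 pq0.2).card =
                D * (EF H pq0.1 pq0.2).card + (s + 1) * (EF H pq0.1 pq0.2).card := by ring
            have h3 : s + 1 ≤ (s + 1) * (EF H pq0.1 pq0.2).card :=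
              Nat.le_mul_of_pos_right _ (by omega)
            omega
          have hexp : (D + (s + 1)) * (cF H + (BF H).card +
              ∑ pq : Fin ((s + 2) * (k - 1) + 1) × Fin (s + 2), (IF H pq.1 pq.2).card) =
              (D + (s + 1)) * (cF H + (BF H).card) +
              (D + (s + 1)) * (∑ pq : Fin ((s + 2) * (k - 1) + 1) × Fin (s + 2),
                (IF H pq.1 pq.2).card) := by ring
          have hexp1 : (D + (s + 1)) * (cF H + (BF H).card) = D + (s + 1) := by
            rw [h1cb]; ring
          omega
      · -- no edges at all
        push_neg at hex
        have hez : (∑ pq : Fin ((s + 2) * (k - 1) + 1) × Fin (s + 2),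
            (EF H pq.1 pq.2).card) = 0 := by
          apply Finset.sum_eq_zero
          intro pq _
          rw [Finset.card_eq_zero, ← Finset.not_nonempty_iff_eq_empty]
          exact Finset.not_nonempty_iff_eq_empty.mpr (hex pq)
        have h3 : (D + (s + 1)) * 3 ≤ (D + (s + 1)) * (cF H + (BF H).card +
            ∑ pq : Fin ((s + 2) * (k - 1) + 1) × Fin (s + 2), (IF H pq.1 pq.2).card) :=
          Nat.mul_le_mul_left _ hv
        rw [hez]
        omega



open Finset
attribute [local instance] Classical.propDecidable
variable {ℓ k r : ℕ}

def petalVerts (ℓ k r : ℕ) : Set (CV ℓ k r) :=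
  {x | ∀ p w, x = some (p, w) → p = 0}

def petalSub (ℓ k r : ℕ) : (CGraph ℓ k r false).Subgraph where
  verts := petalVerts ℓ k r
  Adj x y := (CGraph ℓ k r false).Adj x y ∧ x ∈ petalVerts ℓ k r ∧ y ∈ petalVerts ℓ k r
  adj_sub h := h.1
  edge_vert h := h.2.1
  symm := ⟨fun x y h => ⟨h.1.symm, h.2.2, h.2.1⟩⟩

lemma none_mem_petalVerts : (none : CV ℓ k r) ∈ petalVerts ℓ k r :=
  fun _ _ h => nomatch h

lemma some_mem_petalVerts (p : Fin (r * (k - 1) + 1)) (w : Option (Fin r × Fin (ℓ - 2))) :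
    (some (p, w) : CV ℓ k r) ∈ petalVerts ℓ k r ↔ p = 0 := by
  constructor
  · intro h
    exact h p w rfl
  · rintro rfl p' w' he
    cases he
    rfl

lemma pv_mem_petalVerts (p : Fin (r * (k - 1) + 1)) (q : Fin r) (t : ℕ) :
    pv ℓ k r p q t ∈ petalVerts ℓ k r ↔ p = 0 := by
  rw [pv]
  split <;> rw [some_mem_petalVerts]

lemma petal_cF : cF (petalSub ℓ k r) = 1 := by
  rw [cF, if_pos]
  exact none_mem_petalVerts

lemma petal_BF : BF (petalSub ℓ k r) = {(0 : Fin (r * (k - 1) + 1))} := by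
  ext p
  simp only [BF, Finset.mem_filter, Finset.mem_univ, true_and, Finset.mem_singleton]
  exact some_mem_petalVerts p none

lemma petal_IF (p : Fin (r * (k - 1) + 1)) (q : Fin r) :
    IF (petalSub ℓ k r) p q = if p = 0 then range (ℓ - 2) else ∅ := by
  ext i
  simp only [IF, Finset.mem_filter, Finset.mem_range]
  by_cases hp : p = 0
  · rw [if_pos hp, Finset.mem_range]
    constructor
    · exact fun h => h.1
    · intro h
      exact ⟨h, (pv_mem_petalVerts p q i).mpr hp⟩
  · rw [if_neg hp]
    simp only [Finset.notMem_empty, iff_false, not_and]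
    intro hi hmem
    exact hp ((pv_mem_petalVerts p q i).mp hmem)

lemma petal_EF (hℓ : 3 ≤ ℓ) (p : Fin (r * (k - 1) + 1)) (q : Fin r) :
    EF (petalSub ℓ k r) p q = if p = 0 then range (ℓ - 1) else ∅ := by
  ext t
  have hiff : (Φ ℓ k r p q t ∈ (petalSub ℓ k r).edgeSet) ↔
      (petalSub ℓ k r).Adj (elo ℓ k r p q t) (pv ℓ k r p q t) :=
    SimpleGraph.Subgraph.mem_edgeSet
  simp only [EF, Finset.mem_filter, Finset.mem_range]
  by_cases hp : p = 0
  · rw [if_pos hp, Finset.mem_range]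
    constructor
    · exact fun h => h.1
    · intro ht
      refine ⟨ht, ?_⟩
      rw [hiff]
      refine ⟨adj_of hℓ p q (by omega), ?_, (pv_mem_petalVerts p q t).mpr hp⟩
      rcases Nat.eq_zero_or_pos t with h0 | h0
      · rw [h0, elo_zero]
        exact none_mem_petalVerts
      · rw [elo_pos _ _ (by omega)]
        exact (pv_mem_petalVerts p q (t - 1)).mpr hp
  · rw [if_neg hp]
    simp only [Finset.notMem_empty, iff_false, not_and]
    intro ht hmem
    rw [hiff] at hmem
    exact hp ((pv_mem_petalVerts p q t).mp hmem.2.2)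

lemma petal_sum (c : ℕ) :
    (∑ pq : Fin (r * (k - 1) + 1) × Fin r, if pq.1 = 0 then c else 0) = r * c := by
  rw [Fintype.sum_prod_type]
  have h1 : ∀ p : Fin (r * (k - 1) + 1),
      (∑ _q : Fin r, if p = 0 then c else 0) = r * (if p = 0 then c else 0) := by
    intro p
    rw [Finset.sum_const, Finset.card_univ, Fintype.card_fin, smul_eq_mul]
  rw [Finset.sum_congr rfl (fun p _ => h1 p), ← Finset.mul_sum]
  rw [Finset.sum_ite_eq' Finset.univ (0 : Fin (r * (k - 1) + 1)) (fun _ => c)]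
  all_goals simp

lemma petal_verts_card (hℓ : 3 ≤ ℓ) :
    (petalSub ℓ k r).verts.ncard = 2 + r * (ℓ - 2) := by
  rw [vert_count hℓ, petal_cF, petal_BF, Finset.card_singleton]
  have h1 : ∀ pq : Fin (r * (k - 1) + 1) × Fin r,
      (IF (petalSub ℓ k r) pq.1 pq.2).card = if pq.1 = 0 then ℓ - 2 else 0 := by
    intro pq
    rw [petal_IF]
    split_ifs
    · exact Finset.card_range _
    · exact Finset.card_empty
  rw [Finset.sum_congr rfl (fun pq _ => h1 pq), petal_sum]

lemma petal_edges_card (hℓ : 3 ≤ ℓ) :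
    (petalSub ℓ k r).edgeSet.ncard = r * (ℓ - 1) := by
  rw [edge_count hℓ]
  have h1 : ∀ pq : Fin (r * (k - 1) + 1) × Fin r,
      (EF (petalSub ℓ k r) pq.1 pq.2).card = if pq.1 = 0 then ℓ - 1 else 0 := by
    intro pq
    rw [petal_EF hℓ]
    split_ifs
    · exact Finset.card_range _
    · exact Finset.card_empty
  rw [Finset.sum_congr rfl (fun pq _ => h1 pq), petal_sum]


end CPlusAux

/-- For `ℓ ≥ 3`, `k ≥ 3`, `r ≥ 2`, the 2-density of `C_{ℓ,k}^{r+}`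
equals `(r(ℓ−1)−1)/(r(ℓ−2))`: every subgraph `H` with `v(H) ≥ 3` satisfies
`(e(H)−1)/(v(H)−2) ≤ (r(ℓ−1)−1)/(r(ℓ−2))`, and the maximum is attained (by a single
petal, which has `r(ℓ−2)+2` vertices and `r(ℓ−1)` edges). -/
theorem CPlus_two_density (ℓ k r : ℕ) (hℓ : 3 ≤ ℓ) (hk : 3 ≤ k) (hr : 2 ≤ r) :
    (∀ H : (CGraph ℓ k r false).Subgraph, 3 ≤ H.verts.ncard →
      ((H.edgeSet.ncard : ℚ) - 1) / ((H.verts.ncard : ℚ) - 2) ≤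
        (((r * (ℓ - 1) : ℕ) : ℚ) - 1) / ((r * (ℓ - 2) : ℕ) : ℚ)) ∧
    ∃ H : (CGraph ℓ k r false).Subgraph, 3 ≤ H.verts.ncard ∧
      ((H.edgeSet.ncard : ℚ) - 1) / ((H.verts.ncard : ℚ) - 2) =
        (((r * (ℓ - 1) : ℕ) : ℚ) - 1) / ((r * (ℓ - 2) : ℕ) : ℚ) := by
  classical
  have hX : 0 < r * (ℓ - 2) := Nat.mul_pos (by omega) (by omega)
  have hY : 1 ≤ r * (ℓ - 1) := Nat.mul_pos (by omega) (by omega)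
  have hYQ : ((r * (ℓ - 1) - 1 : ℕ) : ℚ) = ((r * (ℓ - 1) : ℕ) : ℚ) - 1 := by
    exact Nat.cast_sub hY
  constructor
  · intro H hv
    have hQ := CPlusAux.main_ineq hℓ hr H hv
    have hvQ : (3 : ℚ) ≤ (H.verts.ncard : ℚ) := by exact_mod_cast hv
    have hQ' : ((r * (ℓ - 2) : ℕ) : ℚ) * (H.edgeSet.ncard : ℚ) +
        2 * (((r * (ℓ - 1) : ℕ) : ℚ) - 1) ≤
        (((r * (ℓ - 1) : ℕ) : ℚ) - 1) * (H.verts.ncard : ℚ) + ((r * (ℓ - 2) : ℕ) : ℚ) := by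
      rw [← hYQ]
      exact_mod_cast hQ
    rw [div_le_div_iff₀ (by linarith) (by exact_mod_cast hX)]
    nlinarith [hQ']
  · refine ⟨CPlusAux.petalSub ℓ k r, ?_, ?_⟩
    · rw [CPlusAux.petal_verts_card hℓ]
      omega
    · rw [CPlusAux.petal_verts_card hℓ, CPlusAux.petal_edges_card hℓ]
      have h2 : ((2 + r * (ℓ - 2) : ℕ) : ℚ) - 2 = ((r * (ℓ - 2) : ℕ) : ℚ) := by
        push_cast
        ring
      rw [h2]
end
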